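/- arXiv:1404.3555 — 6 statements merged into one kernel-verified Lean document; each statement's English description precedes it below -/
import Mathlib

section
/- Let (Ω, ℱ, (ℱ_s), ℙ) be a filtered probability space carrying ℝ^k-valued adapted processes (F_s) and (ℓ_s) and a real adapted process (y_s) satisfying Assumption 1 with functions 𝒜, ℬ_i (i = 1,…,p), 𝒞_j (j = 1,…,q). Fix z ∈ ℝ, integers t < T, and define backward sequences by the terminal conditions A_T = 0, B_{T,i} = 0 ∈ ℝ^k, C_{T,j} = 0 ∈ ℝ^k and, for s = T−1,…,t: A_s = A_{s+1} + 𝒜(z, B_{s+1,1}, C_{s+1,1}); B_{s,i} = B_{s+1,i+1} + ℬ_i(z, B_{s+1,1}, C_{s+1,1}) for 1 ≤ i ≤ p−1 and B_{s,p} = ℬ_p(z, B_{s+1,1}, C_{s+1,1}); C_{s,j} = C_{s+1,j+1} + 𝒞_j(z, B_{s+1,1}, C_{s+1,1}) for 1 ≤ j ≤ q−1 and C_{s,q} = 𝒞_q(z, B_{s+1,1}, C_{s+1,1}). Then 𝔼[exp(z (y_{t+1} + ⋯ + y_T)) | ℱ_t] = exp(A_t + ∑_{i=1}^p B_{t,i}·F_{t+1−i}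 + ∑_{j=1}^q C_{t,j}·ℓ_{t+1−j}) almost surely. -/
open MeasureTheory ProbabilityTheory Real

/-- Scalar product in `ℝ^k`. -/
def dotk {k : ℕ} (a b : Fin k → ℝ) : ℝ := ∑ i, a i * b i

lemma dotk_zero_left {k : ℕ} (v : Fin k → ℝ) : dotk 0 v = 0 := by simp [dotk]

lemma dotk_smul_left {k : ℕ} (n : ℝ) (a v : Fin k → ℝ) : dotk (n • a) v = n * dotk a v := by
  simp [dotk, Finset.mul_sum, mul_assoc]

lemma dotk_add_left {k : ℕ} (a b v : Fin k → ℝ) : dotk (a + b) v = dotk a v + dotk b v := by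
  simp [dotk, add_mul, Finset.sum_add_distrib]

lemma continuous_dotk {k : ℕ} (b : Fin k → ℝ) : Continuous fun v : Fin k → ℝ => dotk b v := by
  unfold dotk
  exact continuous_finset_sum _ fun i _ => continuous_const.mul (continuous_apply i)

/-- If each `exp (card s • V i)` is integrable then `exp (∑ V i)` is integrable. -/
lemma integrable_exp_sum {Ω ι : Type*} {m : MeasurableSpace Ω} {μ : Measure Ω}
    [IsFiniteMeasure μ] (s : Finset ι) (V : ι → Ω → ℝ)
    (hmeas : ∀ i ∈ s, AEMeasurable (V i) μ)
    (h : ∀ i ∈ s, Integrable (fun ω => Real.exp ((s.card : ℝ) * V i ω)) μ) :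
    Integrable (fun ω => Real.exp (∑ i ∈ s, V i ω)) μ := by
  rcases s.eq_empty_or_nonempty with rfl | hne
  · simpa using integrable_const (1 : ℝ)
  refine Integrable.mono' (g := fun ω => ∑ i ∈ s, Real.exp ((s.card : ℝ) * V i ω))
    (integrable_finset_sum s h) ?_ ?_
  · exact (Real.measurable_exp.comp_aemeasurable
      (Finset.aemeasurable_fun_sum s hmeas)).aestronglyMeasurable
  · refine Filter.Eventually.of_forall fun ω => ?_
    rw [Real.norm_eq_abs, abs_of_pos (Real.exp_pos _)]
    obtain ⟨i0, hi0, hmax⟩ := s.exists_max_image (fun i => V i ω) hne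
    calc Real.exp (∑ i ∈ s, V i ω) ≤ Real.exp ((s.card : ℝ) * V i0 ω) := by
          apply Real.exp_le_exp.2
          calc ∑ i ∈ s, V i ω ≤ ∑ _i ∈ s, V i0 ω := Finset.sum_le_sum fun i hi => hmax i hi
            _ = (s.card : ℝ) * V i0 ω := by rw [Finset.sum_const, nsmul_eq_mul]
      _ ≤ ∑ i ∈ s, Real.exp ((s.card : ℝ) * V i ω) :=
          Finset.single_le_sum (f := fun i => Real.exp ((s.card : ℝ) * V i ω))
            (fun i _ => (Real.exp_pos _).le) hi0

/-- Shift identity for the backward recursion sums. -/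
lemma shift_sum {k p : ℕ} (hp : 0 < p) (D : Fin p → Fin k → ℝ) (G : ℤ → Fin k → ℝ) (m : ℤ) :
    ∑ i : Fin p, dotk (D i) (G (m + 1 - (i : ℕ)))
      = dotk (D ⟨0, hp⟩) (G (m + 1))
        + ∑ i : Fin p,
            dotk (if h : (i : ℕ) + 1 < p then D ⟨(i : ℕ) + 1, h⟩ else 0) (G (m - (i : ℕ))) := by
  obtain ⟨p', rfl⟩ : ∃ p', p = p' + 1 := ⟨p - 1, by omega⟩
  have h0 : (⟨0, hp⟩ : Fin (p' + 1)) = 0 := rfl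
  rw [Fin.sum_univ_succ, Fin.sum_univ_castSucc, h0]
  simp only [Fin.val_zero, Nat.cast_zero, sub_zero, Fin.val_last]
  rw [dif_neg (lt_irrefl _), dotk_zero_left, add_zero, add_right_inj]
  refine Finset.sum_congr rfl fun i _ => ?_
  have hi := i.isLt
  simp only [Fin.coe_castSucc]
  rw [dif_pos (by omega : (i : ℕ) + 1 < p' + 1)]
  have h1 : (⟨(i : ℕ) + 1, by omega⟩ : Fin (p' + 1)) = i.succ := by
    ext; simp
  rw [h1]
  congr 2
  push_cast [Fin.val_succ]
  ring

set_option maxHeartbeats 1000000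

/-- Under Assumption 1, the moment generating function of the aggregated
log-return `y_{t+1} + ⋯ + y_T` under the physical measure `ℙ` is exponentially affine in the
past factors and leverages, with coefficients given by the backward recursion driven by the
one-step functions `𝒜`, `ℬᵢ`, `𝒞ⱼ`. -/
theorem mgf_physical_recursion
    {Ω : Type*} {m0 : MeasurableSpace Ω} {μ : Measure Ω} [IsProbabilityMeasure μ]
    (ℱ : Filtration ℤ m0) {k p q : ℕ} (hp : 0 < p) (hq : 0 < q)
    (F L : ℤ → Ω → (Fin k → ℝ)) (y : ℤ → Ω → ℝ)
    -- the processes are adapted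
    (hFad : ∀ s : ℤ, StronglyMeasurable[ℱ s] (F s))
    (hLad : ∀ s : ℤ, StronglyMeasurable[ℱ s] (L s))
    (hyad : ∀ s : ℤ, StronglyMeasurable[ℱ s] (y s))
    -- Assumption 1
    (𝒜 : ℝ → (Fin k → ℝ) → (Fin k → ℝ) → ℝ)
    (ℬ : ℝ → (Fin k → ℝ) → (Fin k → ℝ) → Fin p → (Fin k → ℝ))
    (𝒞 : ℝ → (Fin k → ℝ) → (Fin k → ℝ) → Fin q → (Fin k → ℝ))
    (hint : ∀ (s : ℤ) (z : ℝ) (b c : Fin k → ℝ),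
      Integrable (fun ω =>
        Real.exp (z * y (s + 1) ω + dotk b (F (s + 1) ω) + dotk c (L (s + 1) ω))) μ)
    (haff : ∀ (s : ℤ) (z : ℝ) (b c : Fin k → ℝ),
      (μ[fun ω =>
          Real.exp (z * y (s + 1) ω + dotk b (F (s + 1) ω) + dotk c (L (s + 1) ω)) | ℱ s])
        =ᵐ[μ] fun ω => Real.exp (𝒜 z b c
          + ∑ i : Fin p, dotk (ℬ z b c i) (F (s - (i : ℕ)) ω)
          + ∑ j : Fin q, dotk (𝒞 z b c j) (L (s - (j : ℕ)) ω)))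
    (h𝒜0 : 𝒜 0 0 0 = 0) (hℬ0 : ∀ i, ℬ 0 0 0 i = 0) (h𝒞0 : ∀ j, 𝒞 0 0 0 j = 0)
    -- the backward sequences
    (z : ℝ) (t T : ℤ) (htT : t < T)
    (A : ℤ → ℝ) (B : ℤ → Fin p → (Fin k → ℝ)) (C : ℤ → Fin q → (Fin k → ℝ))
    (hAT : A T = 0) (hBT : ∀ i, B T i = 0) (hCT : ∀ j, C T j = 0)
    (hArec : ∀ s : ℤ, t ≤ s → s < T →
      A s = A (s + 1) + 𝒜 z (B (s + 1) ⟨0, hp⟩) (C (s + 1) ⟨0, hq⟩))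
    (hBrec : ∀ (s : ℤ), t ≤ s → s < T → ∀ i : Fin p,
      B s i = (if h : (i : ℕ) + 1 < p then B (s + 1) ⟨(i : ℕ) + 1, h⟩ else 0)
        + ℬ z (B (s + 1) ⟨0, hp⟩) (C (s + 1) ⟨0, hq⟩) i)
    (hCrec : ∀ (s : ℤ), t ≤ s → s < T → ∀ j : Fin q,
      C s j = (if h : (j : ℕ) + 1 < q then C (s + 1) ⟨(j : ℕ) + 1, h⟩ else 0)
        + 𝒞 z (B (s + 1) ⟨0, hp⟩) (C (s + 1) ⟨0, hq⟩) j) :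
    (μ[fun ω => Real.exp (z * ∑ u ∈ Finset.Icc (t + 1) T, y u ω) | ℱ t])
      =ᵐ[μ] fun ω => Real.exp (A t
        + ∑ i : Fin p, dotk (B t i) (F (t - (i : ℕ)) ω)
        + ∑ j : Fin q, dotk (C t j) (L (t - (j : ℕ)) ω)) := by
  classical
  have hFm : ∀ u : ℤ, Measurable (F u) := fun u => (hFad u).measurable.mono (ℱ.le u) le_rfl
  have hLm : ∀ u : ℤ, Measurable (L u) := fun u => (hLad u).measurable.mono (ℱ.le u) le_rfl
  have hym : ∀ u : ℤ, Measurable (y u) := fun u => (hyad u).measurable.mono (ℱ.le u) le_rfl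
  -- key integrability fact
  have keyInt : ∀ (s : ℤ) (z' : ℝ) (b : Fin p → Fin k → ℝ) (c : Fin q → Fin k → ℝ),
      Integrable (fun ω => Real.exp (z' * y (s + 1) ω
        + ∑ i : Fin p, dotk (b i) (F (s + 1 - (i : ℕ)) ω)
        + ∑ j : Fin q, dotk (c j) (L (s + 1 - (j : ℕ)) ω))) μ := by
    intro s z' b c
    set V : (Unit ⊕ Fin p ⊕ Fin q) → Ω → ℝ :=
      Sum.elim (fun _ ω => z' * y (s + 1) ω)
        (Sum.elim (fun i ω => dotk (b i) (F (s + 1 - (i : ℕ)) ω))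
          (fun j ω => dotk (c j) (L (s + 1 - (j : ℕ)) ω))) with hV
    set N : ℝ := ((Finset.univ : Finset (Unit ⊕ Fin p ⊕ Fin q)).card : ℝ) with hN
    have hIS : Integrable (fun ω => Real.exp (∑ x : Unit ⊕ Fin p ⊕ Fin q, V x ω)) μ := by
      refine integrable_exp_sum Finset.univ V ?_ ?_
      · rintro (u | i | j) -
        · exact ((hym (s + 1)).const_mul z').aemeasurable
        · exact ((continuous_dotk (b i)).measurable.comp (hFm _)).aemeasurable
        · exact ((continuous_dotk (c j)).measurable.comp (hLm _)).aemeasurable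
      · rintro (u | i | j) -
        · refine (hint s (N * z') 0 0).congr (Filter.Eventually.of_forall fun ω => ?_)
          simp only [hV, Sum.elim_inl, dotk_zero_left, add_zero]
          rw [mul_assoc]
        · have he : (s : ℤ) - (i : ℕ) + 1 = s + 1 - (i : ℕ) := by ring
          have h1 := hint (s - (i : ℕ)) 0 (N • b i) 0
          rw [he] at h1
          refine h1.congr (Filter.Eventually.of_forall fun ω => ?_)
          simp only [hV, Sum.elim_inr, Sum.elim_inl, zero_mul, zero_add, dotk_zero_left,
            add_zero, dotk_smul_left]
          rfl
        · have he : (s : ℤ) - (j : ℕ) + 1 = s + 1 - (j : ℕ) := by ring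
          have h1 := hint (s - (j : ℕ)) 0 0 (N • c j)
          rw [he] at h1
          refine h1.congr (Filter.Eventually.of_forall fun ω => ?_)
          simp only [hV, Sum.elim_inr, zero_mul, zero_add, dotk_zero_left,
            zero_add, dotk_smul_left]
          rfl
    refine hIS.congr (Filter.Eventually.of_forall fun ω => ?_)
    refine congrArg Real.exp ?_
    rw [Fintype.sum_sum_type, Fintype.sum_sum_type]
    simp only [hV, Sum.elim_inl, Sum.elim_inr, Finset.univ_unique, Finset.sum_singleton]
    ring
  -- integrability of the aggregated exponential
  have XInt : ∀ s : ℤ,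
      Integrable (fun ω => Real.exp (z * ∑ u ∈ Finset.Icc (s + 1) T, y u ω)) μ := by
    intro s
    have h := integrable_exp_sum (μ := μ) (Finset.Icc (s + 1) T) (fun u ω => z * y u ω)
      (fun u _ => ((hym u).const_mul z).aemeasurable)
      (fun u _ => by
        have h1 := hint (u - 1) (((Finset.Icc (s + 1) T).card : ℝ) * z) 0 0
        have hu1 : u - 1 + 1 = u := by ring
        rw [hu1] at h1
        refine h1.congr (Filter.Eventually.of_forall fun ω => ?_)
        simp only [dotk_zero_left, add_zero]
        rw [mul_assoc])
    refine h.congr (Filter.Eventually.of_forall fun ω => ?_)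
    beta_reduce
    rw [← Finset.mul_sum]
  -- the backward induction
  have main : ∀ s : ℤ, s ≤ T → t ≤ s →
      (μ[fun ω => Real.exp (z * ∑ u ∈ Finset.Icc (s + 1) T, y u ω) | ℱ s]
        =ᵐ[μ] fun ω => Real.exp (A s
          + ∑ i : Fin p, dotk (B s i) (F (s - (i : ℕ)) ω)
          + ∑ j : Fin q, dotk (C s j) (L (s - (j : ℕ)) ω))) := by
    intro s hsT
    refine Int.le_induction_down (motive := fun s _ => t ≤ s →
      (μ[fun ω => Real.exp (z * ∑ u ∈ Finset.Icc (s + 1) T, y u ω) | ℱ s]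
        =ᵐ[μ] fun ω => Real.exp (A s
          + ∑ i : Fin p, dotk (B s i) (F (s - (i : ℕ)) ω)
          + ∑ j : Fin q, dotk (C s j) (L (s - (j : ℕ)) ω)))) ?_ ?_ s hsT
    · -- base case s = T
      intro _
      have hXT : (fun ω : Ω => Real.exp (z * ∑ u ∈ Finset.Icc (T + 1) T, y u ω))
          = fun _ : Ω => (1 : ℝ) := by
        funext ω
        rw [Finset.Icc_eq_empty (by omega)]
        simp
      have hRT : (fun ω : Ω => Real.exp (A T
            + ∑ i : Fin p, dotk (B T i) (F (T - (i : ℕ)) ω)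
            + ∑ j : Fin q, dotk (C T j) (L (T - (j : ℕ)) ω))) = fun _ : Ω => (1 : ℝ) := by
        funext ω
        rw [hAT]
        simp [hBT, hCT, dotk_zero_left]
      rw [hXT, hRT, condExp_const (ℱ.le T)]
    · -- inductive step
      intro n hnT IH htn1
      have htn : t ≤ n := by omega
      have hIH := IH htn
      have hn1T : n - 1 < T := by omega
      have hs1 : n - 1 + 1 = n := by ring
      have hA := hArec (n - 1) htn1 hn1T
      have hB := hBrec (n - 1) htn1 hn1T
      have hC := hCrec (n - 1) htn1 hn1T
      rw [hs1] at hA hB hC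
      -- shift identities, pointwise
      have hFs : ∀ ω, ∑ i : Fin p, dotk (B n i) (F (n - (i : ℕ)) ω)
          = dotk (B n ⟨0, hp⟩) (F n ω)
            + ∑ i : Fin p, dotk (if h : (i : ℕ) + 1 < p then B n ⟨(i : ℕ) + 1, h⟩ else 0)
                (F (n - 1 - (i : ℕ)) ω) := by
        intro ω
        have hF := shift_sum hp (B n) (fun u => F u ω) (n - 1)
        rw [hs1] at hF
        exact hF
      have hLs : ∀ ω, ∑ j : Fin q, dotk (C n j) (L (n - (j : ℕ)) ω)
          = dotk (C n ⟨0, hq⟩) (L n ω)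
            + ∑ j : Fin q, dotk (if h : (j : ℕ) + 1 < q then C n ⟨(j : ℕ) + 1, h⟩ else 0)
                (L (n - 1 - (j : ℕ)) ω) := by
        intro ω
        have hL := shift_sum hq (C n) (fun u => L u ω) (n - 1)
        rw [hs1] at hL
        exact hL
      -- splitting of the aggregated exponential
      have hXsplit : (fun ω : Ω => Real.exp (z * ∑ u ∈ Finset.Icc (n - 1 + 1) T, y u ω))
          = (fun ω => Real.exp (z * y n ω))
            * (fun ω => Real.exp (z * ∑ u ∈ Finset.Icc (n + 1) T, y u ω)) := by
        funext ω
        have hins : Finset.Icc n T = insert n (Finset.Icc (n + 1) T) := by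
          ext u
          simp only [Finset.mem_Icc, Finset.mem_insert]
          omega
        rw [hs1, hins, Finset.sum_insert (by simp only [Finset.mem_Icc]; omega)]
        simp [mul_add, Real.exp_add]
      -- inner conditional expectation (w.r.t. ℱ n)
      have hf_meas : StronglyMeasurable[ℱ n] (fun ω => Real.exp (z * y n ω)) :=
        Real.continuous_exp.comp_stronglyMeasurable ((hyad n).const_mul z)
      have hinner : μ[fun ω : Ω => Real.exp (z * ∑ u ∈ Finset.Icc (n - 1 + 1) T, y u ω) | ℱ n]
          =ᵐ[μ] fun ω => Real.exp (z * y n ω) * Real.exp (A n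
            + ∑ i : Fin p, dotk (B n i) (F (n - (i : ℕ)) ω)
            + ∑ j : Fin q, dotk (C n j) (L (n - (j : ℕ)) ω)) := by
        rw [hXsplit]
        refine (condExp_mul_of_stronglyMeasurable_left hf_meas ?_ (XInt n)).trans ?_
        · rw [← hXsplit]
          exact XInt (n - 1)
        · filter_upwards [hIH] with ω hω
          simp only [Pi.mul_apply]
          rw [hω]
      -- the ℱ (n-1)-measurable factor and the one-step factor
      set b0 : Fin k → ℝ := B n ⟨0, hp⟩ with hb0
      set c0 : Fin k → ℝ := C n ⟨0, hq⟩ with hc0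
      set f : Ω → ℝ := fun ω => Real.exp (A n
        + (∑ i : Fin p, dotk (if h : (i : ℕ) + 1 < p then B n ⟨(i : ℕ) + 1, h⟩ else 0)
            (F (n - 1 - (i : ℕ)) ω)
          + ∑ j : Fin q, dotk (if h : (j : ℕ) + 1 < q then C n ⟨(j : ℕ) + 1, h⟩ else 0)
            (L (n - 1 - (j : ℕ)) ω))) with hf
      set h : Ω → ℝ := fun ω => Real.exp (z * y n ω + dotk b0 (F n ω) + dotk c0 (L n ω))
        with hh
      have hprod : (fun ω : Ω => Real.exp (z * y n ω) * Real.exp (A n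
            + ∑ i : Fin p, dotk (B n i) (F (n - (i : ℕ)) ω)
            + ∑ j : Fin q, dotk (C n j) (L (n - (j : ℕ)) ω))) = f * h := by
        funext ω
        simp only [hf, hh, Pi.mul_apply]
        rw [← Real.exp_add, ← Real.exp_add]
        congr 1
        have h1 := hFs ω
        have h2 := hLs ω
        linarith
      have hf_meas2 : StronglyMeasurable[ℱ (n - 1)] f := by
        apply Measurable.stronglyMeasurable
        apply Measurable.exp
        apply Measurable.const_add
        apply Measurable.add
        · refine Finset.measurable_sum _ fun i _ => ?_
          exact (continuous_dotk _).measurable.comp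
            ((hFad (n - 1 - (i : ℕ))).measurable.mono (ℱ.mono (by omega)) le_rfl)
        · refine Finset.measurable_sum _ fun j _ => ?_
          exact (continuous_dotk _).measurable.comp
            ((hLad (n - 1 - (j : ℕ))).measurable.mono (ℱ.mono (by omega)) le_rfl)
      have hKI := keyInt (n - 1) z (B n) (C n)
      rw [hs1] at hKI
      have hfh_int : Integrable (f * h) μ := by
        have h2 := hKI.const_mul (Real.exp (A n))
        refine h2.congr (Filter.Eventually.of_forall fun ω => ?_)
        simp only [hf, hh, Pi.mul_apply]
        rw [← Real.exp_add, ← Real.exp_add]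
        refine congrArg Real.exp ?_
        have h1 := hFs ω
        have h3 := hLs ω
        linarith
      have hh_int : Integrable h μ := by
        have h1 := hint (n - 1) z b0 c0
        rw [hs1] at h1
        exact h1
      have haff1 := haff (n - 1) z b0 c0
      rw [hs1] at haff1
      -- assemble
      calc μ[fun ω : Ω => Real.exp (z * ∑ u ∈ Finset.Icc (n - 1 + 1) T, y u ω) | ℱ (n - 1)]
          =ᵐ[μ] μ[μ[fun ω : Ω => Real.exp (z * ∑ u ∈ Finset.Icc (n - 1 + 1) T, y u ω) | ℱ n]
              | ℱ (n - 1)] :=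
            (condExp_condExp_of_le (ℱ.mono (by omega : (n : ℤ) - 1 ≤ n)) (ℱ.le n)).symm
        _ =ᵐ[μ] μ[f * h | ℱ (n - 1)] := by
            refine condExp_congr_ae (hinner.trans ?_)
            rw [hprod]
        _ =ᵐ[μ] f * μ[h | ℱ (n - 1)] := condExp_mul_of_stronglyMeasurable_left hf_meas2 hfh_int hh_int
        _ =ᵐ[μ] f * (fun ω => Real.exp (𝒜 z b0 c0
              + ∑ i : Fin p, dotk (ℬ z b0 c0 i) (F (n - 1 - (i : ℕ)) ω)
              + ∑ j : Fin q, dotk (𝒞 z b0 c0 j) (L (n - 1 - (j : ℕ)) ω))) :=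
            Filter.EventuallyEq.mul Filter.EventuallyEq.rfl haff1
        _ =ᵐ[μ] fun ω => Real.exp (A (n - 1)
              + ∑ i : Fin p, dotk (B (n - 1) i) (F (n - 1 - (i : ℕ)) ω)
              + ∑ j : Fin q, dotk (C (n - 1) j) (L (n - 1 - (j : ℕ)) ω)) := by
            refine Filter.Eventually.of_forall fun ω => ?_
            simp only [hf, Pi.mul_apply]
            rw [← Real.exp_add]
            congr 1
            have e1 : ∑ i : Fin p, dotk (B (n - 1) i) (F (n - 1 - (i : ℕ)) ω)
                = ∑ i : Fin p,
                    (dotk (if h : (i : ℕ) + 1 < p then B n ⟨(i : ℕ) + 1, h⟩ else 0)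
                        (F (n - 1 - (i : ℕ)) ω)
                      + dotk (ℬ z b0 c0 i) (F (n - 1 - (i : ℕ)) ω)) := by
              refine Finset.sum_congr rfl fun i _ => ?_
              rw [hB i, dotk_add_left]
            have e2 : ∑ j : Fin q, dotk (C (n - 1) j) (L (n - 1 - (j : ℕ)) ω)
                = ∑ j : Fin q,
                    (dotk (if h : (j : ℕ) + 1 < q then C n ⟨(j : ℕ) + 1, h⟩ else 0)
                        (L (n - 1 - (j : ℕ)) ω)
                      + dotk (𝒞 z b0 c0 j) (L (n - 1 - (j : ℕ)) ω)) := by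
              refine Finset.sum_congr rfl fun j _ => ?_
              rw [hC j, dotk_add_left]
            rw [hA, e1, e2, Finset.sum_add_distrib, Finset.sum_add_distrib]
            ring
  exact main t (le_of_lt htT) le_rfl
end

section
/- Let δ > 0, Θ ≥ 0, θ > 0, and λ, γ, r ∈ ℝ. Consider on ℝ × ℝ the product measure μ = γ̄(δ, Θ, θ) ⊗ N(0,1), with first coordinate R and second coordinate ε. For all z, b, c ∈ ℝ with c < 1/2 and θ x(z, b, c) < 1, where x(z, b, c) = zλ + b + ((1/2) z² + γ² c − 2 c γ z) / (1 − 2c), one has ∫ exp(z (r + λ R + √R ε) + b R + c (ε − γ √R)²) dμ = exp(z r − (1/2) ln(1 − 2c) − δ w(x(z,b,c), θ) + v(x(z,b,c), θ) Θ), where v(x, θ) = θx/(1 − θx) and w(x, θ) = ln(1 − θx). (In particular, the one-step LHARG model satisfies Assumption 1 with 𝒜(z,b,c) = zr − (1/2)ln(1−2c) − δ w(x,θ) + d v(x,θ), ℬ_i(z,b,c) = v(x,θ) β_i, 𝒞_j(z,b,c) = v(x,θ) α_j, upon taking Θ = d + ∑_i β_i RV_{t+1−i} + ∑_j α_j ℓ_{t+1−j}.)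 -/
open MeasureTheory ProbabilityTheory Real

/-- The noncentral gamma distribution `γ̄(δ, c, θ)` with shape `δ > 0`, noncentrality `c ≥ 0`
and scale `θ > 0`: the Poisson mixture `∑ₖ (e^{−c} cᵏ / k!) • Γ(δ + k, θ)`, where `Γ(a, θ)`
is the gamma distribution with shape `a` and rate `1/θ`. -/
noncomputable def ncGamma (δ c θ : ℝ) : Measure ℝ :=
  Measure.sum fun k : ℕ =>
    ENNReal.ofReal (Real.exp (-c) * c ^ k / Nat.factorial k) • gammaMeasure (δ + k) θ⁻¹

/-- `v(x, θ) = θx/(1 − θx)`. -/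
noncomputable def vfun (x θ : ℝ) : ℝ := θ * x / (1 - θ * x)

/-- `w(x, θ) = ln(1 − θx)`. -/
noncomputable def wfun (x θ : ℝ) : ℝ := Real.log (1 - θ * x)

/-- `x(z, b, c) = zλ + b + ((1/2)z² + γ²c − 2cγz)/(1 − 2c)`. -/
noncomputable def xfun (lam γ z b c : ℝ) : ℝ :=
  z * lam + b + ((1 / 2) * z ^ 2 + γ ^ 2 * c - 2 * c * γ * z) / (1 - 2 * c)


lemma rexp_cast_eq (a B C x : ℝ) : Complex.exp ((a : ℂ) * x ^ 2 + B * x + C)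
    = ((Real.exp (a * x ^ 2 + B * x + C) : ℝ) : ℂ) := by
  rw [show ((a : ℂ) * x ^ 2 + B * x + C) = ((a * x ^ 2 + B * x + C : ℝ) : ℂ) by push_cast; ring,
    Complex.ofReal_exp]

lemma integrable_rexp_quadratic {a : ℝ} (ha : a < 0) (B C : ℝ) :
    Integrable fun x : ℝ ↦ Real.exp (a * x ^ 2 + B * x + C) := by
  have h := (integrable_cexp_quadratic' (b := (a : ℂ)) (by simpa using ha) B C).re
  refine h.congr (Filter.Eventually.of_forall fun x ↦ ?_)
  simp only [rexp_cast_eq, Complex.ofReal_re, RCLike.re_to_complex]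

lemma integral_rexp_quadratic {a : ℝ} (ha : a < 0) (B C : ℝ) :
    ∫ x : ℝ, Real.exp (a * x ^ 2 + B * x + C)
      = Real.sqrt (π / -a) * Real.exp (C - B ^ 2 / (4 * a)) := by
  have h := integral_cexp_quadratic (b := (a : ℂ)) (by simpa using ha) (B : ℂ) (C : ℂ)
  have h1 : (∫ x : ℝ, Complex.exp ((a : ℂ) * x ^ 2 + B * x + C))
      = ((∫ x : ℝ, Real.exp (a * x ^ 2 + B * x + C) : ℝ) : ℂ) := by
    exact (integral_congr_ae
      (Filter.Eventually.of_forall fun x ↦ rexp_cast_eq a B C x)).trans integral_ofReal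
  have hpa : (0:ℝ) ≤ π / -a := div_nonneg Real.pi_pos.le (by linarith)
  have h2 : ((π : ℂ) / -(a : ℂ)) ^ (1 / 2 : ℂ)
      = ((Real.sqrt (π / -a) : ℝ) : ℂ) := by
    rw [Real.sqrt_eq_rpow, Complex.ofReal_cpow hpa, ← Complex.ofReal_neg,
      ← Complex.ofReal_div]
    norm_num
  have h3 : Complex.exp ((C : ℂ) - (B : ℂ) ^ 2 / (4 * a))
      = ((Real.exp (C - B ^ 2 / (4 * a)) : ℝ) : ℂ) := by
    rw [show ((C : ℂ) - (B : ℂ) ^ 2 / (4 * a)) = ((C - B ^ 2 / (4 * a) : ℝ) : ℂ) by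
      push_cast; ring, Complex.ofReal_exp]
  rw [h1, h2, h3, ← Complex.ofReal_mul] at h
  exact_mod_cast h

lemma lintegral_exp_gaussian (c K B : ℝ) (hc : c < 1/2) :
    ∫⁻ y : ℝ, ENNReal.ofReal (Real.exp (c * y ^ 2 + B * y + K)) ∂gaussianReal 0 1
      = ENNReal.ofReal (Real.exp (K + B ^ 2 / (2 * (1 - 2 * c))) / Real.sqrt (1 - 2 * c)) := by
  have h2c : (0:ℝ) < 1 - 2 * c := by linarith
  rw [gaussianReal_of_var_ne_zero _ one_ne_zero,
    lintegral_withDensity_eq_lintegral_mul _ (measurable_gaussianPDF _ _)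
      (by fun_prop)]
  have hpt : ∀ y : ℝ, (gaussianPDF 0 1 * fun y ↦ ENNReal.ofReal (Real.exp (c * y ^ 2 + B * y + K))) y
      = ENNReal.ofReal ((Real.sqrt (2 * π))⁻¹ * Real.exp ((c - 1/2) * y ^ 2 + B * y + K)) := by
    intro y
    simp only [Pi.mul_apply, gaussianPDF, ← ENNReal.ofReal_mul (gaussianPDFReal_nonneg 0 1 y)]
    congr 1
    rw [gaussianPDFReal]
    push_cast
    rw [mul_one, mul_assoc, ← Real.exp_add]
    ring_nf
  simp_rw [hpt]
  rw [← ofReal_integral_eq_lintegral_ofReal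
    ((integrable_rexp_quadratic (by linarith : c - 1/2 < 0) B K).const_mul _)
    (Filter.Eventually.of_forall fun y ↦ by positivity)]
  rw [integral_const_mul, integral_rexp_quadratic (by linarith : c - 1/2 < 0) B K]
  congr 1
  have hsq : Real.sqrt (π / -(c - 1/2)) = Real.sqrt (2 * π) / Real.sqrt (1 - 2 * c) := by
    rw [← Real.sqrt_div (by positivity)]
    congr 1
    rw [show -(c - 1/2) = (1 - 2*c)/2 by ring, div_div_eq_mul_div, mul_comm]
  rw [hsq]
  have hexp : K - B ^ 2 / (4 * (c - 1/2)) = K + B ^ 2 / (2 * (1 - 2 * c)) := by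
    rw [show 4 * (c - 1/2) = -(2 * (1 - 2 * c)) by ring, div_neg, sub_neg_eq_add]
  rw [hexp]
  have h2pi : Real.sqrt (2 * π) ≠ 0 := by positivity
  field_simp

lemma lintegral_exp_gammaMeasure {a r x : ℝ} (ha : 0 < a) (hr : 0 < r) (hx : x < r) :
    ∫⁻ s, ENNReal.ofReal (Real.exp (x * s)) ∂gammaMeasure a r
      = ENNReal.ofReal ((r / (r - x)) ^ a) := by
  have hrx : 0 < r - x := by linarith
  have hmeas : Measurable fun s : ℝ ↦ ENNReal.ofReal (Real.exp (x * s)) := by fun_prop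
  rw [show gammaMeasure a r = volume.withDensity (gammaPDF a r) from rfl,
    lintegral_withDensity_eq_lintegral_mul _ (by
      exact (measurable_gammaPDFReal a r).ennreal_ofReal) hmeas,
    ← lintegral_add_compl _ (measurableSet_Ici (a := (0:ℝ))) (μ := volume)]
  have hleft : ∫⁻ s in (Set.Ici (0:ℝ))ᶜ,
      (gammaPDF a r * fun s ↦ ENNReal.ofReal (Real.exp (x * s))) s = 0 := by
    rw [Set.compl_Ici]
    rw [setLIntegral_congr_fun (g := fun _ ↦ (0:ENNReal)) measurableSet_Iio
      (fun s (hs : s < 0) ↦ by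
        simp [Pi.mul_apply, gammaPDF_of_neg hs])]
    simp
  rw [hleft, add_zero]
  have hint : IntegrableOn (fun s : ℝ ↦ s ^ (a - 1) * Real.exp (-((r - x) * s)))
      (Set.Ioi 0) volume := by
    have := integrableOn_rpow_mul_exp_neg_mul_rpow (p := 1) (s := a - 1) (b := r - x)
      (by linarith) one_pos hrx
    refine this.congr_fun (fun s hs ↦ ?_) measurableSet_Ioi
    simp only [Real.rpow_one, neg_mul]
  have hIci : ∫⁻ s in Set.Ici (0:ℝ),
      (gammaPDF a r * fun s ↦ ENNReal.ofReal (Real.exp (x * s))) s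
      = ∫⁻ s in Set.Ioi (0:ℝ),
        ENNReal.ofReal (r ^ a / Real.Gamma a * (s ^ (a - 1) * Real.exp (-((r - x) * s)))) := by
    rw [← Set.Ioi_union_left, lintegral_union (measurableSet_singleton 0)
      (by simp)]
    have h0 : ∫⁻ s in {(0:ℝ)},
        (gammaPDF a r * fun s ↦ ENNReal.ofReal (Real.exp (x * s))) s = 0 := by
      rw [lintegral_singleton]
      simp
    rw [h0, add_zero]
    refine setLIntegral_congr_fun measurableSet_Ioi ?_
    intro s hs
    have hs' : (0:ℝ) < s := hs
    simp only [Pi.mul_apply, gammaPDF_of_nonneg hs'.le,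
      ← ENNReal.ofReal_mul (by positivity : (0:ℝ) ≤ r ^ a / Real.Gamma a * s ^ (a-1) * Real.exp (-(r*s)))]
    congr 1
    rw [mul_assoc, mul_assoc, ← Real.exp_add]
    ring_nf
  rw [hIci, ← ofReal_integral_eq_lintegral_ofReal (hint.const_mul _) ?_]
  · rw [integral_const_mul, integral_rpow_mul_exp_neg_mul_Ioi ha hrx]
    congr 1
    have hΓ : Real.Gamma a ≠ 0 := (Real.Gamma_pos_of_pos ha).ne'
    calc r ^ a / Real.Gamma a * ((1 / (r - x)) ^ a * Real.Gamma a)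
        = r ^ a * (1 / (r - x)) ^ a := by field_simp
      _ = (r * (1 / (r - x))) ^ a := (Real.mul_rpow hr.le (by positivity)).symm
      _ = (r / (r - x)) ^ a := by rw [mul_one_div]
  · rw [Filter.EventuallyLE, ae_restrict_iff' measurableSet_Ioi]
    exact Filter.Eventually.of_forall fun s (hs : 0 < s) ↦ by positivity

lemma lintegral_exp_ncGamma {δ Θ θ x : ℝ} (hδ : 0 < δ) (hΘ : 0 ≤ Θ) (hθ : 0 < θ)
    (hx : θ * x < 1) :
    ∫⁻ s, ENNReal.ofReal (Real.exp (x * s)) ∂ncGamma δ Θ θ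
      = ENNReal.ofReal
          (Real.exp (-(δ * Real.log (1 - θ * x)) + Θ * (θ * x / (1 - θ * x)))) := by
  have h1 : (0:ℝ) < 1 - θ * x := by linarith
  have hx' : x < θ⁻¹ := by
    rw [← mul_lt_mul_iff_right₀ hθ, mul_inv_cancel₀ hθ.ne']
    exact hx
  set t : ℝ := (1 - θ * x)⁻¹ with ht_def
  have ht : 0 < t := inv_pos.2 h1
  have hkey : θ⁻¹ / (θ⁻¹ - x) = t := by
    rw [ht_def]
    rw [div_eq_iff (by rw [sub_pos] at *; exact (sub_pos.2 hx').ne')]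
    field_simp
  rw [ncGamma, lintegral_sum_measure]
  have hterm : ∀ k : ℕ,
      (∫⁻ s, ENNReal.ofReal (Real.exp (x * s))
        ∂(ENNReal.ofReal (Real.exp (-Θ) * Θ ^ k / Nat.factorial k) •
          gammaMeasure (δ + k) θ⁻¹))
      = ENNReal.ofReal (Real.exp (-Θ) * Θ ^ k / Nat.factorial k * t ^ (δ + k)) := by
    intro k
    rw [lintegral_smul_measure,
      lintegral_exp_gammaMeasure (by positivity) (inv_pos.2 hθ) hx', hkey, smul_eq_mul,
      ← ENNReal.ofReal_mul (by positivity)]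
  simp_rw [hterm]
  rw [← ENNReal.ofReal_tsum_of_nonneg (fun k ↦ by positivity) ?_]
  · congr 1
    have hfun : ∀ k : ℕ, Real.exp (-Θ) * Θ ^ k / Nat.factorial k * t ^ (δ + k)
        = (Real.exp (-Θ) * t ^ δ) * ((Θ * t) ^ k / Nat.factorial k) := by
      intro k
      rw [Real.rpow_add ht, Real.rpow_natCast, mul_pow]
      field_simp
    rw [tsum_congr hfun, tsum_mul_left,
      show (∑' k : ℕ, (Θ * t) ^ k / (Nat.factorial k : ℝ)) = Real.exp (Θ * t) by
        rw [Real.exp_eq_exp_ℝ, NormedSpace.exp_eq_tsum_div]]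
    rw [Real.rpow_def_of_pos ht, Real.log_inv, ← Real.exp_add, ← Real.exp_add]
    congr 1
    have : Θ * t - Θ = Θ * (θ * x / (1 - θ * x)) := by
      rw [ht_def]
      field_simp
      ring
    nlinarith [this]
  · have hfun : ∀ k : ℕ, Real.exp (-Θ) * Θ ^ k / Nat.factorial k * t ^ (δ + k)
        = (Real.exp (-Θ) * t ^ δ) * ((Θ * t) ^ k / Nat.factorial k) := by
      intro k
      rw [Real.rpow_add ht, Real.rpow_natCast, mul_pow]
      field_simp
    refine Summable.congr ((Real.summable_pow_div_factorial (Θ * t)).mul_left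
      (Real.exp (-Θ) * t ^ δ)) fun k ↦ (hfun k).symm

lemma ncGamma_ae_nonneg (δ Θ θ : ℝ) : ∀ᵐ s ∂ncGamma δ Θ θ, 0 ≤ s := by
  rw [ae_iff]
  have hset : {s : ℝ | ¬ 0 ≤ s} = Set.Iio 0 := by ext s; simp
  rw [hset, ncGamma, Measure.sum_apply _ measurableSet_Iio]
  have : ∀ k : ℕ, (ENNReal.ofReal (Real.exp (-Θ) * Θ ^ k / Nat.factorial k) •
      gammaMeasure (δ + k) θ⁻¹) (Set.Iio 0) = 0 := by
    intro k
    rw [Measure.smul_apply, smul_eq_mul,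
      show gammaMeasure (δ + k) θ⁻¹ = volume.withDensity (gammaPDF (δ + k) θ⁻¹) from rfl,
      withDensity_apply _ measurableSet_Iio, lintegral_gammaPDF_of_nonpos le_rfl, mul_zero]
  simp [this]

/-- One-step joint moment generating function of the LHARG model: on
`μ = γ̄(δ, Θ, θ) ⊗ N(0,1)` with coordinates `(R, ε)`, for `c < 1/2` and `θ x(z,b,c) < 1`,
`∫ exp(z(r + λR + √R ε) + bR + c(ε − γ√R)²) dμ
  = exp(zr − (1/2)ln(1 − 2c) − δ w(x(z,b,c),θ) + v(x(z,b,c),θ) Θ)`. -/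
theorem lharg_one_step_mgf (δ Θ θ lam γ r : ℝ)
    (hδ : 0 < δ) (hΘ : 0 ≤ Θ) (hθ : 0 < θ) (z b c : ℝ)
    (hc : c < 1 / 2) (hx : θ * xfun lam γ z b c < 1) :
    ∫ pt : ℝ × ℝ, Real.exp (z * (r + lam * pt.1 + Real.sqrt pt.1 * pt.2) + b * pt.1 +
        c * (pt.2 - γ * Real.sqrt pt.1) ^ 2)
        ∂((ncGamma δ Θ θ).prod (gaussianReal 0 1)) =
      Real.exp (z * r - (1 / 2) * Real.log (1 - 2 * c) - δ * wfun (xfun lam γ z b c) θ +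
        vfun (xfun lam γ z b c) θ * Θ) := by
  have h2c : (0:ℝ) < 1 - 2 * c := by linarith
  set x : ℝ := xfun lam γ z b c with hxdef
  have hθx : (0:ℝ) < 1 - θ * x := by linarith
  have hFc : Continuous fun pt : ℝ × ℝ ↦
      Real.exp (z * (r + lam * pt.1 + Real.sqrt pt.1 * pt.2) + b * pt.1 +
        c * (pt.2 - γ * Real.sqrt pt.1) ^ 2) := by fun_prop
  rw [integral_eq_lintegral_of_nonneg_ae
    (Filter.Eventually.of_forall fun p ↦ (Real.exp_pos _).le) hFc.aestronglyMeasurable]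
  rw [lintegral_prod _ (hFc.measurable.ennreal_ofReal.aemeasurable)]
  have hinner : ∀ᵐ s ∂ncGamma δ Θ θ,
      (∫⁻ y, ENNReal.ofReal (Real.exp (z * (r + lam * s + Real.sqrt s * y) + b * s +
        c * (y - γ * Real.sqrt s) ^ 2)) ∂gaussianReal 0 1)
      = ENNReal.ofReal (Real.exp (z * r) / Real.sqrt (1 - 2 * c)) *
          ENNReal.ofReal (Real.exp (x * s)) := by
    filter_upwards [ncGamma_ae_nonneg δ Θ θ] with s hs
    have hsq : Real.sqrt s ^ 2 = s := Real.sq_sqrt hs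
    have hre : ∀ y : ℝ, z * (r + lam * s + Real.sqrt s * y) + b * s +
        c * (y - γ * Real.sqrt s) ^ 2
        = c * y ^ 2 + ((z - 2 * c * γ) * Real.sqrt s) * y +
          (z * r + (z * lam + b + c * γ ^ 2) * s) := by
      intro y
      have : (y - γ * Real.sqrt s) ^ 2
          = y ^ 2 - 2 * γ * Real.sqrt s * y + γ ^ 2 * (Real.sqrt s ^ 2) := by ring
      rw [this, hsq]
      ring
    simp_rw [hre]
    rw [lintegral_exp_gaussian c _ _ hc]
    have hB2 : ((z - 2 * c * γ) * Real.sqrt s) ^ 2 = (z - 2 * c * γ) ^ 2 * s := by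
      rw [mul_pow, hsq]
    rw [hB2]
    have hexp : z * r + (z * lam + b + c * γ ^ 2) * s
        + (z - 2 * c * γ) ^ 2 * s / (2 * (1 - 2 * c)) = z * r + x * s := by
      rw [hxdef, xfun]
      rw [← div_div]
      linear_combination (-(c * γ ^ 2 * s)) * mul_inv_cancel₀ h2c.ne'
    rw [hexp, Real.exp_add, ← ENNReal.ofReal_mul (by positivity)]
    congr 1
    field_simp
  rw [lintegral_congr_ae hinner, lintegral_const_mul' _ _ ENNReal.ofReal_ne_top,
    lintegral_exp_ncGamma hδ hΘ hθ hx, ← ENNReal.ofReal_mul (by positivity),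
    ENNReal.toReal_ofReal (by positivity)]
  have hsqrt : Real.sqrt (1 - 2 * c) = Real.exp ((1/2) * Real.log (1 - 2 * c)) := by
    rw [Real.sqrt_eq_rpow, Real.rpow_def_of_pos h2c, mul_comm]
  rw [hsqrt, wfun, vfun, div_mul_eq_mul_div, ← Real.exp_add, ← Real.exp_sub]
  congr 1
  ring
end

section
/- Let λ, γ, r ∈ ℝ, θ > 0, δ > 0, d ≥ 0, and β_1,…,β_p, α_1,…,α_q ∈ ℝ. Define x(z, b, c) = zλ + b + ((1/2) z² + γ² c − 2 c γ z)/(1 − 2c), v(x, θ) = θx/(1 − θx), w(x, θ) = ln(1 − θx), and the functions 𝒜(z,b,c) = z r − (1/2) ln(1 − 2c) − δ w(x(z,b,c), θ) + d v(x(z,b,c), θ), ℬ_i(z,b,c) = v(x(z,b,c), θ) β_i (i = 1,…,p), 𝒞_j(z,b,c) = v(x(z,b,c), θ) α_j (j = 1,…,q). Let ν₁, ν₂ ∈ ℝ satisfy θ x(1−ν₂, −ν₁, 0) < 1 and θ x(−ν₂, −ν₁, 0) < 1. Then the no-arbitrage conditions [𝒜(1−ν₂, −ν₁, 0) = r + 𝒜(−ν₂,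 −ν₁, 0), and ℬ_i(1−ν₂, −ν₁, 0) = ℬ_i(−ν₂, −ν₁, 0) for all i, and 𝒞_j(1−ν₂, −ν₁, 0) = 𝒞_j(−ν₂, −ν₁, 0) for all j] hold if and only if ν₂ = λ + 1/2. -/
lemma strict_mono_aux (θ δ d : ℝ) (hθ : 0 < θ) (hδ : 0 < δ) (hd : 0 ≤ d)
    {a b : ℝ} (ha : θ * a < 1) (hb : θ * b < 1) (hab : a < b) :
    -δ * wfun a θ + d * vfun a θ < -δ * wfun b θ + d * vfun b θ := by
  have hpa : 0 < 1 - θ * a := by linarith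
  have hpb : 0 < 1 - θ * b := by linarith
  have hθab : θ * a < θ * b := by nlinarith
  have hw : wfun b θ < wfun a θ := Real.log_lt_log hpb (by linarith)
  have hv : vfun a θ ≤ vfun b θ := by
    unfold vfun
    rw [div_le_div_iff₀ hpa hpb]
    nlinarith
  nlinarith

/-- No-arbitrage conditions for the LHARG model hold iff `ν₂ = λ + 1/2`. -/
theorem lharg_no_arbitrage_iff (lam γ r θ δ d : ℝ) (p q : ℕ)
    (β : Fin p → ℝ) (α : Fin q → ℝ)
    (hθ : 0 < θ) (hδ : 0 < δ) (hd : 0 ≤ d) (ν₁ ν₂ : ℝ)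
    (h1 : θ * xfun lam γ (1 - ν₂) (-ν₁) 0 < 1)
    (h0 : θ * xfun lam γ (-ν₂) (-ν₁) 0 < 1) :
    let A : ℝ → ℝ → ℝ → ℝ := fun z b c =>
      z * r - (1 / 2) * Real.log (1 - 2 * c) - δ * wfun (xfun lam γ z b c) θ +
        d * vfun (xfun lam γ z b c) θ
    let B : Fin p → ℝ → ℝ → ℝ → ℝ := fun i z b c => vfun (xfun lam γ z b c) θ * β i
    let C : Fin q → ℝ → ℝ → ℝ → ℝ := fun j z b c => vfun (xfun lam γ z b c) θ * α j
    (A (1 - ν₂) (-ν₁) 0 = r + A (-ν₂) (-ν₁) 0 ∧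
     (∀ i : Fin p, B i (1 - ν₂) (-ν₁) 0 = B i (-ν₂) (-ν₁) 0) ∧
     (∀ j : Fin q, C j (1 - ν₂) (-ν₁) 0 = C j (-ν₂) (-ν₁) 0)) ↔
    ν₂ = lam + 1 / 2 := by
  intro A B C
  set x₁ := xfun lam γ (1 - ν₂) (-ν₁) 0 with hx1
  set x₀ := xfun lam γ (-ν₂) (-ν₁) 0 with hx0
  have hdiff : x₁ - x₀ = lam + 1 / 2 - ν₂ := by
    simp only [hx1, hx0, xfun]
    ring
  have hxeq : x₁ = x₀ ↔ ν₂ = lam + 1 / 2 := by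
    constructor <;> intro h <;> linarith
  constructor
  · rintro ⟨hA, -, -⟩
    rw [← hxeq]
    simp only [A, mul_zero, sub_zero, Real.log_one, mul_one] at hA
    have key : -δ * wfun x₁ θ + d * vfun x₁ θ = -δ * wfun x₀ θ + d * vfun x₀ θ := by
      linarith
    rcases lt_trichotomy x₁ x₀ with h | h | h
    · exact absurd key (ne_of_lt (strict_mono_aux θ δ d hθ hδ hd h1 h0 h))
    · exact h
    · exact absurd key.symm (ne_of_lt (strict_mono_aux θ δ d hθ hδ hd h0 h1 h))
  · intro h
    have hx : x₁ = x₀ := hxeq.mpr h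
    refine ⟨?_, fun i => by simp [B, ← hx1, ← hx0, hx], fun j => by simp [C, ← hx1, ← hx0, hx]⟩
    simp only [A, mul_zero, sub_zero, Real.log_one, mul_one, ← hx1, ← hx0, hx]
    ring
end

section
/- Let δ > 0, Θ ≥ 0, θ > 0, λ, γ, r ∈ ℝ, and consider on ℝ × ℝ the product measure μ = γ̄(δ, Θ, θ) ⊗ N(0,1) with coordinates (R, ε). Set y = r + λ R + √R ε, ℓ = (ε − γ√R)², and M = exp(−ν₁ R − ν₂ y) / ∫ exp(−ν₁ R − ν₂ y) dμ for ν₁, ν₂ ∈ ℝ. For all z, b, c ∈ ℝ with c < 1/2, θ x(z−ν₂, b−ν₁, c) < 1 and θ x(−ν₂, −ν₁, 0) < 1, one has ∫ M exp(z y + b R + c ℓ) dμ = exp(z r − (1/2) ln(1 − 2c) − δ [w(x(z−ν₂, b−ν₁, c), θ) − w(x(−ν₂, −ν₁, 0), θ)] + [v(x(z−ν₂, b−ν₁, c), θ) − v(x(−ν₂, −ν₁, 0), θ)] Θ), where x(z, b, c) = zλ + b + ((1/2) z² + γ² c − 2 c γ z)/(1 − 2c). -/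
open MeasureTheory ProbabilityTheory Real
open Set
open scoped ENNReal

lemma aux_integrable_rexp_quadratic {b : ℝ} (hb : b < 0) (c d : ℝ) :
    Integrable (fun x : ℝ => Real.exp (b * x ^ 2 + c * x + d)) := by
  have h := (integrable_cexp_quadratic' (b := (b : ℂ)) (by simpa using hb) (c : ℂ) (d : ℂ)).re
  refine h.congr (Filter.Eventually.of_forall fun x => ?_)
  have harg : ((b:ℂ) * x ^ 2 + c * x + d) = ((b * x ^ 2 + c * x + d : ℝ) : ℂ) := by
    push_cast; ring
  have h2 := Complex.exp_ofReal_re (b * x ^ 2 + c * x + d)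
  rw [← harg] at h2
  exact h2

lemma aux_integral_rexp_quadratic {b : ℝ} (hb : b < 0) (c d : ℝ) :
    ∫ x : ℝ, Real.exp (b * x ^ 2 + c * x + d)
      = Real.sqrt (π / -b) * Real.exp (d - c ^ 2 / (4 * b)) := by
  have hb' : ((b : ℂ)).re < 0 := by simpa using hb
  have hpos : (0:ℝ) ≤ π / -b := div_nonneg pi_pos.le (by linarith)
  have h := integral_cexp_quadratic hb' (c : ℂ) (d : ℂ)
  have h2 : ((π:ℂ) / -(b:ℂ)) ^ (1/2 : ℂ) = (((π / -b) ^ (1/2:ℝ) : ℝ) : ℂ) := by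
    rw [Complex.ofReal_cpow hpos]
    norm_num
  rw [h2] at h
  have hint := integrable_cexp_quadratic' (b := (b : ℂ)) hb' (c : ℂ) (d : ℂ)
  calc ∫ x : ℝ, Real.exp (b * x ^ 2 + c * x + d)
      = ∫ x : ℝ, (Complex.exp ((b:ℂ) * x ^ 2 + c * x + d)).re := by
        congr 1; funext x
        have harg : ((b:ℂ) * x ^ 2 + c * x + d) = ((b * x ^ 2 + c * x + d : ℝ) : ℂ) := by
          push_cast; ring
        rw [harg, Complex.exp_ofReal_re]
    _ = (∫ x : ℝ, Complex.exp ((b:ℂ) * x ^ 2 + c * x + d)).re := integral_re hint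
    _ = Real.sqrt (π / -b) * Real.exp (d - c ^ 2 / (4 * b)) := by
        rw [h, show Real.sqrt (π / -b) = (π / -b) ^ (1/2 : ℝ) from Real.sqrt_eq_rpow _]
        have : (((π / -b) ^ (1/2:ℝ) : ℝ) : ℂ) * Complex.exp ((d:ℂ) - (c:ℂ)^2 / (4 * (b:ℂ)))
            = (((π / -b) ^ (1/2:ℝ) * Real.exp (d - c^2/(4*b)) : ℝ) : ℂ) := by
          push_cast; ring
        rw [this, Complex.ofReal_re]

lemma aux_lintegral_gaussian (c a d : ℝ) (hc : c < 1/2) :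
    ∫⁻ x, ENNReal.ofReal (Real.exp (c * x ^ 2 + a * x + d)) ∂(gaussianReal 0 1)
      = ENNReal.ofReal (Real.exp (d + a ^ 2 / (2 * (1 - 2 * c))) / Real.sqrt (1 - 2 * c)) := by
  have h1 : (0:ℝ) < 1 - 2*c := by linarith
  have hb : c - 1/2 < 0 := by linarith
  rw [gaussianReal_of_var_ne_zero _ one_ne_zero,
    lintegral_withDensity_eq_lintegral_mul _ (measurable_gaussianPDF 0 1)
      (by fun_prop : Measurable fun x : ℝ => ENNReal.ofReal (Real.exp (c * x ^ 2 + a * x + d)))]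
  have key : ∀ x : ℝ, (gaussianPDF 0 1 * fun x => ENNReal.ofReal (Real.exp (c * x ^ 2 + a * x + d))) x
      = ENNReal.ofReal ((Real.sqrt (2*π))⁻¹ * Real.exp ((c - 1/2) * x ^ 2 + a * x + d)) := by
    intro x
    simp only [Pi.mul_apply, gaussianPDF, ← ENNReal.ofReal_mul (gaussianPDFReal_nonneg 0 1 x)]
    congr 1
    simp only [gaussianPDFReal, NNReal.coe_one, mul_one, sub_zero]
    rw [mul_assoc, ← Real.exp_add]
    ring_nf
  simp only [key]
  rw [← ofReal_integral_eq_lintegral_ofReal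
      ((aux_integrable_rexp_quadratic hb a d).const_mul _)
      (Filter.Eventually.of_forall fun x => by positivity)]
  rw [integral_const_mul, aux_integral_rexp_quadratic hb a d]
  congr 1
  have e1 : c - 1/2 ≠ 0 := ne_of_lt hb
  have e2 : (1:ℝ) - 2*c ≠ 0 := ne_of_gt h1
  have h2 : π / -(c - 1/2) = 2*π / (1 - 2*c) := by
    rw [div_eq_div_iff (by linarith : (0:ℝ) < -(c - 1/2)).ne' h1.ne']; ring
  have h3 : d - a^2/(4*(c - 1/2)) = d + a^2/(2*(1-2*c)) := by
    rw [show 4*(c - 1/2) = -(2*(1-2*c)) by ring, div_neg, sub_neg_eq_add]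
  rw [h2, h3, Real.sqrt_div (by positivity) (1 - 2*c)]
  have h4 : Real.sqrt (2*π) ≠ 0 := by positivity
  have h5 : Real.sqrt (1 - 2*c) ≠ 0 := by positivity
  field_simp

lemma aux_lintegral_gamma {a ρ t : ℝ} (ha : 0 < a) (hρ : 0 < ρ) (ht : t < ρ) :
    ∫⁻ x, ENNReal.ofReal (Real.exp (t * x)) ∂(gammaMeasure a ρ)
      = ENNReal.ofReal ((1 - t / ρ) ^ (-a)) := by
  have hρt : (0:ℝ) < ρ - t := by linarith
  have hΓ := Real.Gamma_pos_of_pos ha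
  rw [gammaMeasure, lintegral_withDensity_eq_lintegral_mul _
    (by unfold gammaPDF; exact (measurable_gammaPDFReal a ρ).ennreal_ofReal)
    (by fun_prop : Measurable fun x : ℝ => ENNReal.ofReal (Real.exp (t * x)))]
  rw [← lintegral_add_compl (μ := volume) _ (measurableSet_Ici : MeasurableSet (Ici (0:ℝ)))]
  have left0 : ∫⁻ x in (Ici (0:ℝ))ᶜ,
      (gammaPDF a ρ * fun x => ENNReal.ofReal (Real.exp (t * x))) x = 0 := by
    rw [compl_Ici]
    rw [setLIntegral_congr_fun measurableSet_Iio
      (fun x (hx : x < 0) => by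
        rw [Pi.mul_apply, gammaPDF_of_neg hx, zero_mul])]
    simp
  rw [left0, add_zero]
  have hnn : ∀ x : ℝ, 0 ≤ x →
      0 ≤ ρ ^ a / Real.Gamma a * x ^ (a - 1) * Real.exp (-(ρ * x)) * Real.exp (t * x) :=
    fun x hx => mul_nonneg (mul_nonneg (mul_nonneg (by positivity)
      (Real.rpow_nonneg hx _)) (Real.exp_pos _).le) (Real.exp_pos _).le
  have hset : ∀ x ∈ Ici (0:ℝ),
      (gammaPDF a ρ * fun x => ENNReal.ofReal (Real.exp (t * x))) x
        = ENNReal.ofReal (ρ ^ a / Real.Gamma a * x ^ (a - 1) * Real.exp (-(ρ * x))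
            * Real.exp (t * x)) := by
    intro x hx
    rw [Pi.mul_apply, gammaPDF_of_nonneg hx,
      ← ENNReal.ofReal_mul (mul_nonneg (mul_nonneg (by positivity)
        (Real.rpow_nonneg hx _)) (Real.exp_pos _).le)]
  rw [setLIntegral_congr_fun measurableSet_Ici hset]
  have hInt : IntegrableOn (fun x : ℝ => ρ ^ a / Real.Gamma a * x ^ (a - 1)
      * Real.exp (-(ρ * x)) * Real.exp (t * x)) (Ici 0) := by
    rw [integrableOn_Ici_iff_integrableOn_Ioi]
    have h := integrableOn_rpow_mul_exp_neg_mul_rpow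
      (p := 1) (s := a - 1) (b := ρ - t) (by linarith) one_pos hρt
    simp_rw [Real.rpow_one] at h
    refine IntegrableOn.congr_fun (h.const_mul (ρ ^ a / Real.Gamma a)) (fun x hx => ?_) measurableSet_Ioi
    rw [show -(ρ - t) * x = -(ρ * x) + t * x by ring, Real.exp_add]
    ring
  rw [← ofReal_integral_eq_lintegral_ofReal hInt
    ((ae_restrict_iff' measurableSet_Ici).mpr (ae_of_all _ hnn))]
  congr 1
  rw [integral_Ici_eq_integral_Ioi]
  have hset2 : ∀ x ∈ Ioi (0:ℝ),
      ρ ^ a / Real.Gamma a * x ^ (a - 1) * Real.exp (-(ρ * x)) * Real.exp (t * x)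
        = ρ ^ a / Real.Gamma a * (x ^ (a - 1) * Real.exp (-((ρ - t) * x))) := by
    intro x hx
    rw [show -((ρ - t) * x) = -(ρ * x) + t * x by ring, Real.exp_add]
    ring
  rw [setIntegral_congr_fun measurableSet_Ioi hset2, integral_const_mul,
    integral_rpow_mul_exp_neg_mul_Ioi ha hρt]
  have hne1 : (ρ:ℝ) ^ a ≠ 0 := (Real.rpow_pos_of_pos hρ a).ne'
  have hne2 : (ρ - t) ^ a ≠ 0 := (Real.rpow_pos_of_pos hρt a).ne'
  have h1 : (1:ℝ) - t / ρ = (ρ - t) / ρ := by field_simp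
  rw [h1, Real.rpow_neg (by positivity), Real.div_rpow hρt.le hρ.le,
    Real.div_rpow zero_le_one hρt.le, Real.one_rpow]
  field_simp

lemma aux_ncGamma_ae_nonneg (δ Θ θ : ℝ) : ∀ᵐ x ∂(ncGamma δ Θ θ), 0 ≤ x := by
  rw [ae_iff]
  have hs : {x : ℝ | ¬ 0 ≤ x} = Iio 0 := by ext x; simp
  rw [hs, ncGamma, Measure.sum_apply _ measurableSet_Iio]
  have hg : ∀ k : ℕ, gammaMeasure (δ + k) θ⁻¹ (Iio 0) = 0 := fun k => by
    rw [gammaMeasure, withDensity_apply _ measurableSet_Iio]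
    exact lintegral_gammaPDF_of_nonpos le_rfl
  simp [Measure.smul_apply, hg]

lemma aux_lintegral_ncGamma {δ Θ θ t : ℝ} (hδ : 0 < δ) (hΘ : 0 ≤ Θ) (hθ : 0 < θ)
    (ht : θ * t < 1) :
    ∫⁻ x, ENNReal.ofReal (Real.exp (t * x)) ∂(ncGamma δ Θ θ)
      = ENNReal.ofReal (Real.exp (-δ * Real.log (1 - θ * t) + θ * t / (1 - θ * t) * Θ)) := by
  have hu : (0:ℝ) < 1 - θ * t := by linarith
  have ht' : t < θ⁻¹ := by
    rw [show θ⁻¹ = 1/θ by rw [one_div], lt_div_iff₀ hθ]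
    nlinarith
  rw [ncGamma, lintegral_sum_measure]
  have harg : (1:ℝ) - t / θ⁻¹ = 1 - θ * t := by
    rw [div_inv_eq_mul, mul_comm]
  have hterm : ∀ k : ℕ, Real.exp (-Θ) * Θ ^ k / (Nat.factorial k : ℝ)
        * (1 - θ * t) ^ (-(δ + (k:ℝ)))
      = (Real.exp (-Θ) * (1 - θ * t) ^ (-δ)) * ((Θ / (1 - θ * t)) ^ k / (Nat.factorial k : ℝ)) := by
    intro k
    have hfac : ((Nat.factorial k : ℝ)) ≠ 0 := Nat.cast_ne_zero.mpr (Nat.factorial_ne_zero k)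
    have hak : ((1:ℝ) - θ * t) ^ k ≠ 0 := pow_ne_zero _ hu.ne'
    rw [show -(δ + (k:ℝ)) = -δ + (-(k:ℝ)) by ring, Real.rpow_add hu,
      show ((1 - θ * t) ^ (-(k:ℝ))) = ((1 - θ * t) ^ k)⁻¹ by
        rw [Real.rpow_neg hu.le, Real.rpow_natCast],
      div_pow]
    field_simp
  have hsum : Summable (fun k : ℕ => (Real.exp (-Θ) * (1 - θ * t) ^ (-δ))
      * ((Θ / (1 - θ * t)) ^ k / (Nat.factorial k : ℝ))) :=
    (Real.summable_pow_div_factorial _).mul_left _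
  have hnn : ∀ k : ℕ, 0 ≤ (Real.exp (-Θ) * (1 - θ * t) ^ (-δ))
      * ((Θ / (1 - θ * t)) ^ k / (Nat.factorial k : ℝ)) := by
    intro k
    have : (0:ℝ) ≤ Θ / (1 - θ * t) := div_nonneg hΘ hu.le
    positivity
  calc ∑' k : ℕ, ∫⁻ x, ENNReal.ofReal (Real.exp (t * x))
        ∂(ENNReal.ofReal (Real.exp (-Θ) * Θ ^ k / Nat.factorial k) • gammaMeasure (δ + k) θ⁻¹)
      = ∑' k : ℕ, ENNReal.ofReal ((Real.exp (-Θ) * (1 - θ * t) ^ (-δ))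
          * ((Θ / (1 - θ * t)) ^ k / (Nat.factorial k : ℝ))) := by
        refine tsum_congr fun k => ?_
        rw [lintegral_smul_measure, smul_eq_mul,
          aux_lintegral_gamma (by positivity) (inv_pos.mpr hθ) ht', harg,
          ← ENNReal.ofReal_mul (by positivity), hterm k]
    _ = ENNReal.ofReal (∑' k : ℕ, (Real.exp (-Θ) * (1 - θ * t) ^ (-δ))
          * ((Θ / (1 - θ * t)) ^ k / (Nat.factorial k : ℝ))) :=
        (ENNReal.ofReal_tsum_of_nonneg hnn hsum).symm
    _ = ENNReal.ofReal (Real.exp (-δ * Real.log (1 - θ * t) + θ * t / (1 - θ * t) * Θ)) := by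
        congr 1
        rw [tsum_mul_left, Real.exp_eq_exp_ℝ,
          (NormedSpace.expSeries_div_hasSum_exp (Θ / (1 - θ * t))).tsum_eq,
          ← Real.exp_eq_exp_ℝ]
        rw [Real.rpow_def_of_pos hu]
        rw [← Real.exp_add, ← Real.exp_add]
        congr 1
        field_simp
        ring

lemma aux_master (δ Θ θ lam γ r : ℝ) (hδ : 0 < δ) (hΘ : 0 ≤ Θ) (hθ : 0 < θ)
    (z b c : ℝ) (hc : c < 1/2) (hx : θ * xfun lam γ z b c < 1) :
    ∫ pt : ℝ × ℝ, Real.exp (z * (r + lam * pt.1 + Real.sqrt pt.1 * pt.2) + b * pt.1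
        + c * (pt.2 - γ * Real.sqrt pt.1) ^ 2) ∂((ncGamma δ Θ θ).prod (gaussianReal 0 1))
      = Real.exp (z * r - (1/2) * Real.log (1 - 2*c) - δ * wfun (xfun lam γ z b c) θ
          + vfun (xfun lam γ z b c) θ * Θ) := by
  set X := xfun lam γ z b c with hX
  have h1 : (0:ℝ) < 1 - 2*c := by linarith
  have hu : (0:ℝ) < 1 - θ*X := by linarith
  set f : ℝ × ℝ → ℝ := fun pt => Real.exp (z * (r + lam * pt.1 + Real.sqrt pt.1 * pt.2)
    + b * pt.1 + c * (pt.2 - γ * Real.sqrt pt.1) ^ 2) with hf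
  have hfc : Continuous f := by fun_prop
  rw [integral_eq_lintegral_of_nonneg_ae
    (Filter.Eventually.of_forall fun pt => (Real.exp_pos _).le) hfc.aestronglyMeasurable]
  have hinner : ∀ᵐ R ∂(ncGamma δ Θ θ),
      (∫⁻ ε, ENNReal.ofReal (f (R, ε)) ∂(gaussianReal 0 1))
        = ENNReal.ofReal (Real.exp (z*r) / Real.sqrt (1 - 2*c)) * ENNReal.ofReal (Real.exp (X*R)) := by
    filter_upwards [aux_ncGamma_ae_nonneg δ Θ θ] with R hR
    have hsq : Real.sqrt R ^ 2 = R := Real.sq_sqrt hR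
    have hrw : ∀ ε : ℝ, f (R, ε) = Real.exp (c * ε ^ 2 + ((z - 2*c*γ) * Real.sqrt R) * ε
        + (z*r + z*lam*R + b*R + c*γ^2*R)) := by
      intro ε
      simp only [hf]
      congr 1
      set s := Real.sqrt R with hs
      rw [← hsq]
      ring
    simp_rw [hrw]
    rw [aux_lintegral_gaussian c _ _ hc]
    rw [← ENNReal.ofReal_mul (by positivity)]
    congr 1
    have hexp : z*r + z*lam*R + b*R + c*γ^2*R + ((z - 2*c*γ) * Real.sqrt R)^2/(2*(1 - 2*c))
        = z*r + X*R := by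
      rw [mul_pow, hsq, hX, xfun]
      have := h1.ne'
      rw [div_mul_eq_div_div]
      linear_combination (-c*γ^2*R) * mul_inv_cancel₀ this
    rw [hexp, Real.exp_add]
    ring
  have hmeas : AEMeasurable (fun pt : ℝ × ℝ => ENNReal.ofReal (f pt))
      ((ncGamma δ Θ θ).prod (gaussianReal 0 1)) :=
    (ENNReal.continuous_ofReal.comp hfc).measurable.aemeasurable
  rw [lintegral_prod _ hmeas, lintegral_congr_ae hinner,
    lintegral_const_mul _ (by fun_prop : Measurable fun R : ℝ => ENNReal.ofReal (Real.exp (X*R))),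
    aux_lintegral_ncGamma hδ hΘ hθ hx,
    ← ENNReal.ofReal_mul (by positivity),
    ENNReal.toReal_ofReal (by positivity)]
  have hsqrt : Real.sqrt (1 - 2*c) = Real.exp (Real.log (1 - 2*c) / 2) := by
    rw [← Real.exp_log (Real.sqrt_pos.mpr h1), Real.log_sqrt h1.le]
  rw [hsqrt, wfun, vfun, div_mul_eq_mul_div, ← Real.exp_add, ← Real.exp_sub]
  congr 1
  ring


/-- One-step risk-neutral moment generating function of the LHARG model:
on `μ = γ̄(δ, Θ, θ) ⊗ N(0,1)` with coordinates `(R, ε)`, `y = r + λR + √R ε`,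
`ℓ = (ε − γ√R)²`, `M = exp(−ν₁R − ν₂y)/∫ exp(−ν₁R − ν₂y) dμ`, for `c < 1/2`,
`θ x(z−ν₂, b−ν₁, c) < 1` and `θ x(−ν₂, −ν₁, 0) < 1`,
`∫ M exp(zy + bR + cℓ) dμ = exp(zr − (1/2)ln(1 − 2c)
  − δ[w(x(z−ν₂,b−ν₁,c),θ) − w(x(−ν₂,−ν₁,0),θ)]
  + [v(x(z−ν₂,b−ν₁,c),θ) − v(x(−ν₂,−ν₁,0),θ)] Θ)`. -/
theorem lharg_one_step_risk_neutral_mgf (δ Θ θ lam γ r ν₁ ν₂ : ℝ)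
    (hδ : 0 < δ) (hΘ : 0 ≤ Θ) (hθ : 0 < θ) (z b c : ℝ)
    (hc : c < 1 / 2)
    (hx1 : θ * xfun lam γ (z - ν₂) (b - ν₁) c < 1)
    (hx0 : θ * xfun lam γ (-ν₂) (-ν₁) 0 < 1) :
    let μ : Measure (ℝ × ℝ) := (ncGamma δ Θ θ).prod (gaussianReal 0 1)
    let y : ℝ × ℝ → ℝ := fun pt => r + lam * pt.1 + Real.sqrt pt.1 * pt.2
    let ℓ : ℝ × ℝ → ℝ := fun pt => (pt.2 - γ * Real.sqrt pt.1) ^ 2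
    let M : ℝ × ℝ → ℝ := fun pt =>
      Real.exp (-ν₁ * pt.1 - ν₂ * y pt) / ∫ pt', Real.exp (-ν₁ * pt'.1 - ν₂ * y pt') ∂μ
    ∫ pt, M pt * Real.exp (z * y pt + b * pt.1 + c * ℓ pt) ∂μ =
      Real.exp (z * r - (1 / 2) * Real.log (1 - 2 * c) -
        δ * (wfun (xfun lam γ (z - ν₂) (b - ν₁) c) θ - wfun (xfun lam γ (-ν₂) (-ν₁) 0) θ) +
        (vfun (xfun lam γ (z - ν₂) (b - ν₁) c) θ - vfun (xfun lam γ (-ν₂) (-ν₁) 0) θ) * Θ) := by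
  intro μ y ℓ M
  have hDeq : (fun pt : ℝ × ℝ => Real.exp (-ν₁ * pt.1 - ν₂ * y pt))
      = fun pt : ℝ × ℝ => Real.exp ((-ν₂) * (r + lam * pt.1 + Real.sqrt pt.1 * pt.2)
          + (-ν₁) * pt.1 + 0 * (pt.2 - γ * Real.sqrt pt.1) ^ 2) := by
    funext pt
    simp only [y]
    congr 1
    ring
  have hD : ∫ pt', Real.exp (-ν₁ * pt'.1 - ν₂ * y pt') ∂μ
      = Real.exp ((-ν₂) * r - (1/2) * Real.log (1 - 2*0)
          - δ * wfun (xfun lam γ (-ν₂) (-ν₁) 0) θ + vfun (xfun lam γ (-ν₂) (-ν₁) 0) θ * Θ) := by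
    show ∫ pt', (fun pt : ℝ × ℝ => Real.exp (-ν₁ * pt.1 - ν₂ * y pt)) pt' ∂μ = _
    rw [hDeq]
    exact aux_master δ Θ θ lam γ r hδ hΘ hθ (-ν₂) (-ν₁) 0 (by norm_num) hx0
  have hMrw : ∀ pt : ℝ × ℝ, M pt * Real.exp (z * y pt + b * pt.1 + c * ℓ pt)
      = Real.exp ((z - ν₂) * (r + lam * pt.1 + Real.sqrt pt.1 * pt.2) + (b - ν₁) * pt.1
          + c * (pt.2 - γ * Real.sqrt pt.1) ^ 2)
        / (∫ pt', Real.exp (-ν₁ * pt'.1 - ν₂ * y pt') ∂μ) := by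
    intro pt
    simp only [M, y, ℓ]
    rw [div_mul_eq_mul_div, ← Real.exp_add]
    congr 2
    ring
  simp only [hMrw]
  rw [integral_div, aux_master δ Θ θ lam γ r hδ hΘ hθ (z - ν₂) (b - ν₁) c hc hx1, hD,
    ← Real.exp_sub]
  congr 1
  rw [show (1:ℝ) - 2*0 = 1 by norm_num, Real.log_one]
  ring
end

section
/- Let δ > 0, Θ ≥ 0, θ > 0, γ ∈ ℝ, and consider on ℝ × ℝ the product measure μ = γ̄(δ, Θ, θ) ⊗ N(0,1) with coordinates (R, ε). Then the covariance of the random variables √R ε and (ε − γ √R)² under μ equals −2 γ θ (δ + Θ); in particular it is negative whenever γ > 0 (the leverage effect: log-returns and next-day variance noncentrality are negatively correlated). -/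
open MeasureTheory ProbabilityTheory Real
open Set
open scoped ENNReal NNReal

lemma aux_integral_withDensity_ofReal {p : ℝ → ℝ} (hp : Measurable p) (hp0 : ∀ x, 0 ≤ p x)
    (g : ℝ → ℝ) :
    ∫ x, g x ∂((volume : Measure ℝ).withDensity (fun x => ENNReal.ofReal (p x))) =
      ∫ x, p x * g x := by
  rw [show (fun x => ENNReal.ofReal (p x)) = (fun x => ((p x).toNNReal : ℝ≥0∞)) from rfl,
    integral_withDensity_eq_integral_smul hp.real_toNNReal]
  congr 1
  funext x
  simp [NNReal.smul_def, Real.coe_toNNReal _ (hp0 x)]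

lemma aux_integrable_withDensity_ofReal {p : ℝ → ℝ} (hp : Measurable p) (hp0 : ∀ x, 0 ≤ p x)
    {g : ℝ → ℝ} (hg : Integrable (fun x => p x * g x) volume) :
    Integrable g ((volume : Measure ℝ).withDensity (fun x => ENNReal.ofReal (p x))) := by
  rw [show (fun x => ENNReal.ofReal (p x)) = (fun x => ((p x).toNNReal : ℝ≥0∞)) from rfl,
    integrable_withDensity_iff_integrable_smul hp.real_toNNReal]
  exact hg.congr (ae_of_all _ fun x => by
    simp [NNReal.smul_def, Real.coe_toNNReal _ (hp0 x)])

lemma aux_integrableOn_rpow_mul_exp_neg_mul {s b : ℝ} (hs : -1 < s) (hb : 0 < b) :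
    IntegrableOn (fun x : ℝ => x ^ s * Real.exp (-(b * x))) (Ioi 0) := by
  have h := integrableOn_rpow_mul_exp_neg_mul_rpow (p := 1) hs one_pos hb
  apply h.congr_fun ?_ measurableSet_Ioi
  intro x hx
  simp only [Real.rpow_one, neg_mul]

lemma aux_gammaPDFReal_mul_pow {a r : ℝ} (n : ℕ) {x : ℝ} (hx : 0 < x) :
    gammaPDFReal a r x * x ^ n
      = r ^ a / Real.Gamma a * (x ^ (a + n - 1) * Real.exp (-(r * x))) := by
  rw [gammaPDFReal, if_pos hx.le, show a + n - 1 = a - 1 + n by ring,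
    Real.rpow_add hx, Real.rpow_natCast]
  ring

lemma aux_gamma_eq (a r : ℝ) :
    gammaMeasure a r
      = (volume : Measure ℝ).withDensity (fun x => ENNReal.ofReal (gammaPDFReal a r x)) := rfl

lemma aux_gamma_integral {a r : ℝ} (ha : 0 < a) (hr : 0 < r) (g : ℝ → ℝ) :
    ∫ x, g x ∂(gammaMeasure a r) = ∫ x, gammaPDFReal a r x * g x := by
  rw [aux_gamma_eq,
    aux_integral_withDensity_ofReal (measurable_gammaPDFReal a r) (gammaPDFReal_nonneg ha hr)]

lemma aux_gamma_integral_pow {a r : ℝ} (ha : 0 < a) (hr : 0 < r) (n : ℕ) (hn : n ≠ 0) :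
    ∫ x, x ^ n ∂(gammaMeasure a r) = Real.Gamma (a + n) / Real.Gamma a / r ^ n := by
  have han : (0:ℝ) < a + n := by positivity
  rw [aux_gamma_integral ha hr]
  rw [← setIntegral_eq_integral_of_forall_compl_eq_zero (s := Ioi 0) ?h0]
  case h0 =>
    intro x hx
    rcases lt_or_eq_of_le (by simpa using hx : x ≤ 0) with h | h
    · simp [gammaPDFReal, not_le.mpr h]
    · subst h; simp [zero_pow hn]
  rw [setIntegral_congr_fun measurableSet_Ioi (fun x hx => aux_gammaPDFReal_mul_pow n hx),
    integral_const_mul, integral_rpow_mul_exp_neg_mul_Ioi han hr]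
  have hra : (0:ℝ) < r ^ a := Real.rpow_pos_of_pos hr a
  have hrn : (0:ℝ) < r ^ (n:ℝ) := Real.rpow_pos_of_pos hr _
  have hg : (0:ℝ) < Real.Gamma a := Real.Gamma_pos_of_pos ha
  have h1 : (r⁻¹ : ℝ) ^ (a + (n:ℝ)) = (r ^ a)⁻¹ * (r ^ (n:ℝ))⁻¹ := by
    rw [Real.inv_rpow hr.le, Real.rpow_add hr, mul_inv]
  rw [one_div, h1, ← Real.rpow_natCast r n]
  field_simp

lemma aux_gamma_integrable_pow {a r : ℝ} (ha : 0 < a) (hr : 0 < r) (n : ℕ) (hn : n ≠ 0) :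
    Integrable (fun x => x ^ n) (gammaMeasure a r) := by
  rw [aux_gamma_eq]
  apply aux_integrable_withDensity_ofReal (measurable_gammaPDFReal a r) (gammaPDFReal_nonneg ha hr)
  rw [← integrableOn_univ, show (univ : Set ℝ) = Iic 0 ∪ Ioi 0 from (Iic_union_Ioi).symm,
    integrableOn_union]
  constructor
  · apply (integrableOn_zero (s := Iic 0)).congr_fun ?_ measurableSet_Iic
    intro x hx
    rcases lt_or_eq_of_le (by simpa using hx : x ≤ 0) with h | h
    · simp [gammaPDFReal, not_le.mpr h]
    · subst h; simp [zero_pow hn]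
  · refine MeasureTheory.IntegrableOn.congr_fun ?_
      (fun x hx => (aux_gammaPDFReal_mul_pow n hx).symm) measurableSet_Ioi
    exact (aux_integrableOn_rpow_mul_exp_neg_mul
      (show (-1:ℝ) < a + n - 1 by push_cast; nlinarith [Nat.cast_nonneg (α := ℝ) n]) hr).const_mul
      (r ^ a / Real.Gamma a)

lemma aux_gamma_integral_id {a r : ℝ} (ha : 0 < a) (hr : 0 < r) :
    ∫ x, x ∂(gammaMeasure a r) = a / r := by
  have h := aux_gamma_integral_pow ha hr 1 one_ne_zero
  have hg : Real.Gamma a ≠ 0 := (Real.Gamma_pos_of_pos ha).ne'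
  simp only [pow_one, Nat.cast_one] at h
  rw [h, Real.Gamma_add_one ha.ne']
  field_simp

lemma aux_gamma_integrable_id {a r : ℝ} (ha : 0 < a) (hr : 0 < r) :
    Integrable (fun x : ℝ => x) (gammaMeasure a r) := by
  have h := aux_gamma_integrable_pow ha hr 1 one_ne_zero
  simpa using h

lemma aux_gamma_integral_sq {a r : ℝ} (ha : 0 < a) (hr : 0 < r) :
    ∫ x, x ^ 2 ∂(gammaMeasure a r) = a * (a + 1) / r ^ 2 := by
  have h := aux_gamma_integral_pow ha hr 2 two_ne_zero
  have hg : Real.Gamma a ≠ 0 := (Real.Gamma_pos_of_pos ha).ne'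
  rw [h, show a + ((2:ℕ):ℝ) = (a + 1) + 1 by push_cast; ring,
    Real.Gamma_add_one (by positivity), Real.Gamma_add_one ha.ne']
  field_simp

lemma aux_gamma_ae {a r : ℝ} : ∀ᵐ x ∂(gammaMeasure a r), 0 ≤ x := by
  rw [ae_iff]
  have hs : {x : ℝ | ¬ 0 ≤ x} = Iio 0 := by ext x; simp [not_le]
  rw [hs, gammaMeasure, withDensity_apply _ measurableSet_Iio]
  simpa using lintegral_gammaPDF_of_nonpos (le_refl (0:ℝ)) (a := a) (r := r)

lemma aux_ncGamma_ae {δ Θ θ : ℝ} : ∀ᵐ x ∂(ncGamma δ Θ θ), 0 ≤ x := by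
  rw [ae_iff]
  have hs : {x : ℝ | ¬ 0 ≤ x} = Iio 0 := by ext x; simp [not_le]
  rw [hs, ncGamma, Measure.sum_apply _ measurableSet_Iio]
  have : ∀ k : ℕ, (ENNReal.ofReal (Real.exp (-Θ) * Θ ^ k / Nat.factorial k) •
      gammaMeasure (δ + k) θ⁻¹) (Iio 0) = 0 := by
    intro k
    rw [Measure.smul_apply, smul_eq_mul]
    rw [gammaMeasure, withDensity_apply _ measurableSet_Iio]
    simp [lintegral_gammaPDF_of_nonpos (le_refl (0:ℝ))]
  simp [this]

lemma aux_tsum_exp (c : ℝ) : ∑' k : ℕ, c ^ k / (Nat.factorial k : ℝ) = Real.exp c := by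
  rw [Real.exp_eq_exp_ℝ, NormedSpace.exp_eq_tsum_div]

lemma aux_shift_eq (c : ℝ) (n : ℕ) :
    ((n+1 : ℕ) : ℝ) * (c ^ (n+1) / (Nat.factorial (n+1) : ℝ)) = c * (c ^ n / Nat.factorial n) := by
  have h : (Nat.factorial n : ℝ) ≠ 0 := Nat.cast_ne_zero.mpr (Nat.factorial_ne_zero n)
  rw [Nat.factorial_succ, pow_succ]
  push_cast
  field_simp

lemma aux_summable1 (c : ℝ) : Summable (fun k : ℕ => (k:ℝ) * (c ^ k / Nat.factorial k)) := by
  rw [← summable_nat_add_iff 1]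
  exact (((Real.summable_pow_div_factorial c).mul_left c).congr fun n => (aux_shift_eq c n).symm)

lemma aux_tsum1 (c : ℝ) :
    ∑' k : ℕ, (k:ℝ) * (c ^ k / Nat.factorial k) = c * Real.exp c := by
  rw [Summable.tsum_eq_zero_add (aux_summable1 c)]
  simp only [Nat.cast_zero, zero_mul, zero_add]
  calc ∑' n : ℕ, ((n+1 : ℕ):ℝ) * (c ^ (n+1) / (Nat.factorial (n+1) : ℝ))
      = ∑' n : ℕ, c * (c ^ n / Nat.factorial n) := tsum_congr fun n => aux_shift_eq c n
    _ = c * Real.exp c := by rw [tsum_mul_left, aux_tsum_exp]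

lemma aux_summable2 (c : ℝ) : Summable (fun k : ℕ => (k:ℝ)^2 * (c ^ k / Nat.factorial k)) := by
  rw [← summable_nat_add_iff 1]
  have h := ((aux_summable1 c).mul_left c).add ((Real.summable_pow_div_factorial c).mul_left c)
  apply h.congr
  intro n
  have h2 : ((n+1 : ℕ):ℝ)^2 * (c ^ (n+1) / (Nat.factorial (n+1) : ℝ))
      = ((n+1 : ℕ):ℝ) * (((n+1 : ℕ):ℝ) * (c ^ (n+1) / (Nat.factorial (n+1) : ℝ))) := by ring
  rw [h2, aux_shift_eq c n]
  push_cast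
  ring

lemma aux_W_nonneg {Θ : ℝ} (hΘ : 0 ≤ Θ) (k : ℕ) :
    0 ≤ Real.exp (-Θ) * Θ ^ k / Nat.factorial k := by positivity

lemma aux_W_summable {Θ : ℝ} :
    Summable (fun k : ℕ => Real.exp (-Θ) * Θ ^ k / Nat.factorial k) := by
  apply ((Real.summable_pow_div_factorial Θ).mul_left (Real.exp (-Θ))).congr
  intro n
  rw [mul_div_assoc]

lemma aux_W_tsum {Θ : ℝ} : ∑' k : ℕ, Real.exp (-Θ) * Θ ^ k / Nat.factorial k = 1 := by
  calc ∑' k : ℕ, Real.exp (-Θ) * Θ ^ k / Nat.factorial k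
      = ∑' k : ℕ, Real.exp (-Θ) * (Θ ^ k / Nat.factorial k) := by
        apply tsum_congr; intro k; rw [mul_div_assoc]
    _ = Real.exp (-Θ) * Real.exp Θ := by rw [tsum_mul_left, aux_tsum_exp]
    _ = 1 := by rw [← Real.exp_add]; simp

theorem aux_ncGamma_prob {δ Θ θ : ℝ} (hδ : 0 < δ) (hΘ : 0 ≤ Θ) (hθ : 0 < θ) :
    IsProbabilityMeasure (ncGamma δ Θ θ) := by
  constructor
  rw [ncGamma, Measure.sum_apply _ MeasurableSet.univ]
  have h : ∀ k : ℕ, (ENNReal.ofReal (Real.exp (-Θ) * Θ ^ k / Nat.factorial k) •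
      gammaMeasure (δ + k) θ⁻¹) univ = ENNReal.ofReal (Real.exp (-Θ) * Θ ^ k / Nat.factorial k) := by
    intro k
    haveI := isProbabilityMeasure_gammaMeasure (show (0:ℝ) < δ + k by positivity) (inv_pos.mpr hθ)
    rw [Measure.smul_apply, smul_eq_mul, measure_univ, mul_one]
  rw [tsum_congr h, ← ENNReal.ofReal_tsum_of_nonneg (aux_W_nonneg hΘ) aux_W_summable, aux_W_tsum,
    ENNReal.ofReal_one]

lemma aux_ncGamma_int {δ Θ θ : ℝ} (hδ : 0 < δ) (hΘ : 0 ≤ Θ) (hθ : 0 < θ)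
    {f : ℝ → ℝ} (hfm : Measurable f) (hf0 : ∀ x, 0 ≤ x → 0 ≤ f x)
    {m : ℕ → ℝ} (hm0 : ∀ k, 0 ≤ m k)
    (hint : ∀ k : ℕ, Integrable f (gammaMeasure (δ + k) θ⁻¹))
    (hval : ∀ k : ℕ, ∫ x, f x ∂(gammaMeasure (δ + k) θ⁻¹) = m k)
    (hsum : Summable (fun k => (Real.exp (-Θ) * Θ ^ k / Nat.factorial k) * m k)) :
    Integrable f (ncGamma δ Θ θ) ∧
      ∫ x, f x ∂(ncGamma δ Θ θ)
        = ∑' k : ℕ, (Real.exp (-Θ) * Θ ^ k / Nat.factorial k) * m k := by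
  have hlint : ∀ k : ℕ, ∫⁻ x, ‖f x‖ₑ ∂(gammaMeasure (δ + k) θ⁻¹) = ENNReal.ofReal (m k) := by
    intro k
    have hae : 0 ≤ᵐ[gammaMeasure (δ + k) θ⁻¹] f :=
      aux_gamma_ae.mono fun x hx => hf0 x hx
    rw [← hval k, ofReal_integral_eq_lintegral_ofReal (hint k) hae]
    apply lintegral_congr_ae
    filter_upwards [hae] with x hx
    rw [← ofReal_norm, Real.norm_of_nonneg hx]
  have hfin : HasFiniteIntegral f (ncGamma δ Θ θ) := by
    rw [hasFiniteIntegral_def, ncGamma, lintegral_sum_measure]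
    have : ∀ k : ℕ, (∫⁻ x, ‖f x‖ₑ ∂(ENNReal.ofReal (Real.exp (-Θ) * Θ ^ k / Nat.factorial k) •
        gammaMeasure (δ + k) θ⁻¹))
        = ENNReal.ofReal ((Real.exp (-Θ) * Θ ^ k / Nat.factorial k) * m k) := by
      intro k
      rw [lintegral_smul_measure, hlint k, smul_eq_mul, ← ENNReal.ofReal_mul (aux_W_nonneg hΘ k)]
    rw [tsum_congr this, ← ENNReal.ofReal_tsum_of_nonneg
      (fun k => mul_nonneg (aux_W_nonneg hΘ k) (hm0 k)) hsum]
    exact ENNReal.ofReal_lt_top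
  have hi : Integrable f (ncGamma δ Θ θ) := ⟨hfm.aestronglyMeasurable, hfin⟩
  refine ⟨hi, ?_⟩
  rw [ncGamma] at hi ⊢
  rw [integral_sum_measure hi]
  apply tsum_congr
  intro k
  rw [integral_smul_measure, ENNReal.toReal_ofReal (aux_W_nonneg hΘ k), smul_eq_mul, hval k]

lemma aux_ncGamma_id {δ Θ θ : ℝ} (hδ : 0 < δ) (hΘ : 0 ≤ Θ) (hθ : 0 < θ) :
    Integrable (fun x : ℝ => x) (ncGamma δ Θ θ) ∧
      ∫ x, x ∂(ncGamma δ Θ θ) = θ * (δ + Θ) := by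
  have hθi : (0:ℝ) < θ⁻¹ := inv_pos.mpr hθ
  have key := aux_ncGamma_int (f := fun x : ℝ => x) (m := fun k : ℕ => (δ + k) * θ)
    hδ hΘ hθ measurable_id (fun x hx => hx)
    (fun k => by positivity)
    (fun k => aux_gamma_integrable_id (by positivity) hθi)
    (fun k => by rw [aux_gamma_integral_id (by positivity) hθi, div_eq_mul_inv, inv_inv])
    ?hsum
  case hsum =>
    apply (((Real.summable_pow_div_factorial Θ).mul_left (Real.exp (-Θ) * (δ * θ))).add
      ((aux_summable1 Θ).mul_left (θ * Real.exp (-Θ)))).congr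
    intro k
    push_cast
    ring
  refine ⟨key.1, ?_⟩
  rw [key.2]
  have hre : (fun k : ℕ => (Real.exp (-Θ) * Θ ^ k / Nat.factorial k) * ((δ + k) * θ))
      = fun k : ℕ => (Real.exp (-Θ) * (δ * θ)) * (Θ ^ k / Nat.factorial k)
        + (θ * Real.exp (-Θ)) * ((k:ℝ) * (Θ ^ k / Nat.factorial k)) := by
    funext k; push_cast; ring
  rw [hre, Summable.tsum_add ((Real.summable_pow_div_factorial Θ).mul_left _)
    ((aux_summable1 Θ).mul_left _), tsum_mul_left, tsum_mul_left, aux_tsum_exp, aux_tsum1]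
  have hexp : Real.exp (-Θ) * Real.exp Θ = 1 := by rw [← Real.exp_add]; simp
  linear_combination (δ * θ + θ * Θ) * hexp

lemma aux_ncGamma_sq {δ Θ θ : ℝ} (hδ : 0 < δ) (hΘ : 0 ≤ Θ) (hθ : 0 < θ) :
    Integrable (fun x : ℝ => x ^ 2) (ncGamma δ Θ θ) := by
  have hθi : (0:ℝ) < θ⁻¹ := inv_pos.mpr hθ
  have key := aux_ncGamma_int (f := fun x : ℝ => x ^ 2)
    (m := fun k : ℕ => (δ + k) * ((δ + k) + 1) * θ ^ 2)
    hδ hΘ hθ (measurable_id.pow_const 2) (fun x _ => sq_nonneg x)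
    (fun k => by positivity)
    (fun k => aux_gamma_integrable_pow (by positivity) hθi 2 two_ne_zero)
    (fun k => by rw [aux_gamma_integral_sq (by positivity) hθi, inv_pow, div_eq_mul_inv, inv_inv])
    ?hsum
  case hsum =>
    apply ((((Real.summable_pow_div_factorial Θ).mul_left
        (Real.exp (-Θ) * (θ^2 * (δ^2 + δ)))).add
      ((aux_summable1 Θ).mul_left (Real.exp (-Θ) * (θ^2 * (2*δ + 1))))).add
      ((aux_summable2 Θ).mul_left (Real.exp (-Θ) * θ^2))).congr
    intro k
    push_cast
    ring
  exact key.1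

lemma aux_sqrt_pow_bound {j : ℕ} (hj : j ≤ 4) (x : ℝ) : ‖Real.sqrt x ^ j‖ ≤ 1 + x ^ 2 := by
  rw [Real.norm_of_nonneg (pow_nonneg (Real.sqrt_nonneg x) j)]
  rcases le_total x 1 with h | h
  · have h1 : Real.sqrt x ≤ 1 := by
      rcases le_total x 0 with h0 | h0
      · simp [Real.sqrt_eq_zero_of_nonpos h0]
      · exact Real.sqrt_le_one.mpr h
    nlinarith [pow_le_one₀ (Real.sqrt_nonneg x) h1 (n := j), sq_nonneg x]
  · have h0 : (0:ℝ) ≤ x := le_trans zero_le_one h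
    have h1 : (1:ℝ) ≤ Real.sqrt x := by
      rw [show (1:ℝ) = Real.sqrt 1 from (Real.sqrt_one).symm]
      exact Real.sqrt_le_sqrt h
    have h2 : Real.sqrt x ^ j ≤ Real.sqrt x ^ 4 := pow_le_pow_right₀ h1 hj
    have h3 : Real.sqrt x ^ 4 = x ^ 2 := by
      rw [show 4 = 2 * 2 from rfl, pow_mul, Real.sq_sqrt h0]
    nlinarith

lemma aux_ncGamma_sqrt_pow {δ Θ θ : ℝ} (hδ : 0 < δ) (hΘ : 0 ≤ Θ) (hθ : 0 < θ)
    {j : ℕ} (hj : j ≤ 4) :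
    Integrable (fun x : ℝ => Real.sqrt x ^ j) (ncGamma δ Θ θ) := by
  haveI := aux_ncGamma_prob hδ hΘ hθ
  have hb : Integrable (fun x : ℝ => 1 + x ^ 2) (ncGamma δ Θ θ) :=
    (integrable_const 1).add (aux_ncGamma_sq hδ hΘ hθ)
  refine hb.mono' ((Real.continuous_sqrt.pow j).aestronglyMeasurable) ?_
  exact ae_of_all _ (aux_sqrt_pow_bound hj)

lemma aux_ncGamma_sqrt_sq {δ Θ θ : ℝ} (hδ : 0 < δ) (hΘ : 0 ≤ Θ) (hθ : 0 < θ) :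
    ∫ x, Real.sqrt x ^ 2 ∂(ncGamma δ Θ θ) = θ * (δ + Θ) := by
  rw [← (aux_ncGamma_id hδ hΘ hθ).2]
  apply integral_congr_ae
  filter_upwards [aux_ncGamma_ae (δ := δ) (Θ := Θ) (θ := θ)] with x hx
  rw [Real.sq_sqrt hx]

lemma aux_gauss_eq : gaussianReal 0 1
    = (volume : Measure ℝ).withDensity (fun x => ENNReal.ofReal (gaussianPDFReal 0 1 x)) := by
  rw [gaussianReal_of_var_ne_zero 0 one_ne_zero]
  rfl

lemma aux_gaussPDF_mul (n : ℕ) (x : ℝ) :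
    gaussianPDFReal 0 1 x * x ^ n
      = (Real.sqrt (2 * π))⁻¹ * (x ^ n * Real.exp (-2⁻¹ * x ^ 2)) := by
  rw [gaussianPDFReal]
  simp only [NNReal.coe_one, mul_one, sub_zero]
  rw [show -x ^ 2 / 2 = -2⁻¹ * x ^ 2 by ring]
  ring

lemma aux_gauss_base (n : ℕ) :
    Integrable (fun x : ℝ => x ^ n * Real.exp (-2⁻¹ * x ^ 2)) := by
  have h := integrable_rpow_mul_exp_neg_mul_sq (show (0:ℝ) < 2⁻¹ by norm_num)
    (show (-1:ℝ) < (n:ℝ) from lt_of_lt_of_le neg_one_lt_zero (Nat.cast_nonneg n))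
  simpa [Real.rpow_natCast] using h

lemma aux_gauss_integrable (n : ℕ) : Integrable (fun x : ℝ => x ^ n) (gaussianReal 0 1) := by
  rw [aux_gauss_eq]
  apply aux_integrable_withDensity_ofReal (measurable_gaussianPDFReal 0 1)
    (gaussianPDFReal_nonneg 0 1)
  apply ((aux_gauss_base n).const_mul ((Real.sqrt (2 * π))⁻¹)).congr
  exact ae_of_all _ fun x => (aux_gaussPDF_mul n x).symm

lemma aux_gauss_odd {n : ℕ} (hn : Odd n) : ∫ x, x ^ n ∂(gaussianReal 0 1) = 0 := by
  have h2 : (NNReal.mk ((-1:ℝ)^2) (sq_nonneg _) * 1) = 1 := by ext; norm_num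
  have h := gaussianReal_map_const_mul (μ := 0) (v := 1) (-1)
  rw [h2, mul_zero] at h
  have hmap : (gaussianReal 0 1).map (fun x : ℝ => -x) = gaussianReal 0 1 := by
    rw [show (fun x : ℝ => -x) = (((-1:ℝ)) * ·) from funext fun x => (neg_one_mul x).symm]
    exact h
  have hint := integral_map (μ := gaussianReal 0 1) (φ := fun x : ℝ => -x)
    (f := fun x : ℝ => x ^ n) measurable_neg.aemeasurable
    (by rw [hmap]; exact (measurable_id.pow_const n).aestronglyMeasurable)
  rw [hmap] at hint
  have hneg : ∫ x, (-x:ℝ) ^ n ∂(gaussianReal 0 1) = - ∫ x, x ^ n ∂(gaussianReal 0 1) := by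
    rw [← integral_neg]
    exact integral_congr_ae (ae_of_all _ fun x => hn.neg_pow x)
  rw [hneg] at hint
  linarith

lemma aux_gauss_sq : ∫ x, x ^ 2 ∂(gaussianReal 0 1) = 1 := by
  rw [aux_gauss_eq, aux_integral_withDensity_ofReal (measurable_gaussianPDFReal 0 1)
    (gaussianPDFReal_nonneg 0 1)]
  simp only [aux_gaussPDF_mul 2]
  rw [integral_const_mul]
  set f : ℝ → ℝ := fun x => x ^ 2 * Real.exp (-2⁻¹ * x ^ 2) with hf
  have hfi : Integrable f := aux_gauss_base 2
  have hsplit : ∫ x, f x = (∫ x in Iic (0:ℝ), f x) + ∫ x in Ioi (0:ℝ), f x := by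
    rw [← compl_Iic]
    exact (integral_add_compl measurableSet_Iic hfi).symm
  have heven : ∫ x in Iic (0:ℝ), f x = ∫ x in Ioi (0:ℝ), f x := by
    have h1 : ∫ x in Iic (0:ℝ), f x = ∫ x in Iic (0:ℝ), f (-x) := by
      apply setIntegral_congr_fun measurableSet_Iic
      intro x _
      simp [hf, neg_sq]
    rw [h1, integral_comp_neg_Iic, neg_zero]
  have hIoi : ∫ x in Ioi (0:ℝ), f x
      = (2⁻¹:ℝ) ^ (-((2:ℝ)+1)/2) * (1/2) * Real.Gamma (((2:ℝ)+1)/2) := by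
    rw [← integral_rpow_mul_exp_neg_mul_rpow (show (0:ℝ) < 2 by norm_num)
      (show (-1:ℝ) < 2 by norm_num) (show (0:ℝ) < 2⁻¹ by norm_num)]
    apply setIntegral_congr_fun measurableSet_Ioi
    intro x _
    simp only [hf, Real.rpow_two]
  have hΓ : Real.Gamma (((2:ℝ)+1)/2) = (1/2) * Real.sqrt π := by
    rw [show (((2:ℝ)+1)/2) = 1/2 + 1 by norm_num, Real.Gamma_add_one (by norm_num),
      Real.Gamma_one_half_eq]
  have hpow : (2⁻¹:ℝ) ^ (-((2:ℝ)+1)/2) = 2 * Real.sqrt 2 := by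
    rw [Real.inv_rpow (by norm_num : (0:ℝ) ≤ 2), ← Real.rpow_neg (by norm_num : (0:ℝ) ≤ 2),
      show (-(-((2:ℝ)+1)/2)) = 1 + 1/2 by norm_num, Real.rpow_add (by norm_num : (0:ℝ) < 2),
      Real.rpow_one, ← Real.sqrt_eq_rpow]
  rw [hsplit, heven, hIoi, hΓ, hpow]
  have hs2 : Real.sqrt 2 * Real.sqrt π = Real.sqrt (2 * π) := (Real.sqrt_mul (by norm_num) π).symm
  have hpos : (0:ℝ) < Real.sqrt (2 * π) := Real.sqrt_pos.mpr (by positivity)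
  field_simp
  rw [hs2]; ring

/-- The leverage effect: on `μ = γ̄(δ, Θ, θ) ⊗ N(0,1)` with coordinates
`(R, ε)`, the covariance of `√R ε` and `(ε − γ√R)²` equals `−2γθ(δ + Θ)`; in particular it
is negative whenever `γ > 0`. -/
theorem lharg_leverage_covariance (δ Θ θ γ : ℝ)
    (hδ : 0 < δ) (hΘ : 0 ≤ Θ) (hθ : 0 < θ) :
    let μ : Measure (ℝ × ℝ) := (ncGamma δ Θ θ).prod (gaussianReal 0 1)
    let U : ℝ × ℝ → ℝ := fun pt => Real.sqrt pt.1 * pt.2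
    let V : ℝ × ℝ → ℝ := fun pt => (pt.2 - γ * Real.sqrt pt.1) ^ 2
    let cov : ℝ := (∫ pt, U pt * V pt ∂μ) - (∫ pt, U pt ∂μ) * (∫ pt, V pt ∂μ)
    cov = -2 * γ * θ * (δ + Θ) ∧ (0 < γ → cov < 0) := by
  intro μ U V cov
  haveI hP : IsProbabilityMeasure (ncGamma δ Θ θ) := aux_ncGamma_prob hδ hΘ hθ
  have hν1 : Integrable (fun r : ℝ => Real.sqrt r) (ncGamma δ Θ θ) := by
    have h := aux_ncGamma_sqrt_pow hδ hΘ hθ (j := 1) (by norm_num)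
    simpa using h
  have hν2 : Integrable (fun r : ℝ => Real.sqrt r ^ 2) (ncGamma δ Θ θ) :=
    aux_ncGamma_sqrt_pow hδ hΘ hθ (by norm_num)
  have hν3 : Integrable (fun r : ℝ => Real.sqrt r ^ 3) (ncGamma δ Θ θ) :=
    aux_ncGamma_sqrt_pow hδ hΘ hθ (by norm_num)
  have hg1 : Integrable (fun x : ℝ => x) (gaussianReal 0 1) := by
    have h := aux_gauss_integrable 1
    simpa using h
  have hg2 : Integrable (fun x : ℝ => x ^ 2) (gaussianReal 0 1) := aux_gauss_integrable 2
  have hg3 : Integrable (fun x : ℝ => x ^ 3) (gaussianReal 0 1) := aux_gauss_integrable 3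
  have hEg1 : ∫ x, x ∂(gaussianReal 0 1) = 0 := by
    have h := aux_gauss_odd (n := 1) odd_one
    simpa using h
  have hEg3 : ∫ x, x ^ 3 ∂(gaussianReal 0 1) = 0 := aux_gauss_odd (by decide)
  have hU : ∫ pt, U pt ∂μ = 0 := by
    show ∫ pt : ℝ × ℝ, Real.sqrt pt.1 * pt.2 ∂((ncGamma δ Θ θ).prod (gaussianReal 0 1)) = 0
    rw [integral_prod_mul (fun r : ℝ => Real.sqrt r) (fun x : ℝ => x), hEg1, mul_zero]
  have hUV : ∫ pt, U pt * V pt ∂μ = -2 * γ * θ * (δ + Θ) := by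
    show ∫ pt : ℝ × ℝ, (Real.sqrt pt.1 * pt.2) * ((pt.2 - γ * Real.sqrt pt.1) ^ 2)
        ∂((ncGamma δ Θ θ).prod (gaussianReal 0 1)) = -2 * γ * θ * (δ + Θ)
    have hA : Integrable (fun pt : ℝ × ℝ => Real.sqrt pt.1 * pt.2 ^ 3)
        ((ncGamma δ Θ θ).prod (gaussianReal 0 1)) := hν1.mul_prod hg3
    have hB : Integrable (fun pt : ℝ × ℝ => ((-2 * γ) * Real.sqrt pt.1 ^ 2) * pt.2 ^ 2)
        ((ncGamma δ Θ θ).prod (gaussianReal 0 1)) := (hν2.const_mul (-2 * γ)).mul_prod hg2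
    have hC : Integrable (fun pt : ℝ × ℝ => (γ ^ 2 * Real.sqrt pt.1 ^ 3) * pt.2)
        ((ncGamma δ Θ θ).prod (gaussianReal 0 1)) := (hν3.const_mul (γ ^ 2)).mul_prod hg1
    have hsum_eq : (fun pt : ℝ × ℝ => (Real.sqrt pt.1 * pt.2) * ((pt.2 - γ * Real.sqrt pt.1) ^ 2))
        = fun pt : ℝ × ℝ => Real.sqrt pt.1 * pt.2 ^ 3
          + (((-2 * γ) * Real.sqrt pt.1 ^ 2) * pt.2 ^ 2 + (γ ^ 2 * Real.sqrt pt.1 ^ 3) * pt.2) := by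
      funext pt
      ring
    have hBC : Integrable (fun pt : ℝ × ℝ => ((-2 * γ) * Real.sqrt pt.1 ^ 2) * pt.2 ^ 2
        + (γ ^ 2 * Real.sqrt pt.1 ^ 3) * pt.2) ((ncGamma δ Θ θ).prod (gaussianReal 0 1)) :=
      hB.add hC
    rw [hsum_eq, integral_add hA hBC, integral_add hB hC,
      integral_prod_mul (fun r : ℝ => Real.sqrt r) (fun x : ℝ => x ^ 3),
      integral_prod_mul (fun r : ℝ => (-2 * γ) * Real.sqrt r ^ 2) (fun x : ℝ => x ^ 2),
      integral_prod_mul (fun r : ℝ => γ ^ 2 * Real.sqrt r ^ 3) (fun x : ℝ => x),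
      hEg1, hEg3, aux_gauss_sq, integral_const_mul, aux_ncGamma_sqrt_sq hδ hΘ hθ]
    ring
  have hcov : cov = -2 * γ * θ * (δ + Θ) := by
    show (∫ pt, U pt * V pt ∂μ) - (∫ pt, U pt ∂μ) * (∫ pt, V pt ∂μ) = -2 * γ * θ * (δ + Θ)
    rw [hUV, hU, zero_mul, sub_zero]
  refine ⟨hcov, fun hγ => ?_⟩
  rw [hcov]
  have h1 : (0:ℝ) < 2 * γ * θ * (δ + Θ) := by positivity
  linarith
end

section
/- Let λ, γ, ν₁ ∈ ℝ, θ > 0, δ > 0, d ≥ 0, β, α ∈ ℝ, and set ν₂ = λ + 1/2, γ* = γ + λ + 1/2, Y* = −λ²/2 − ν₁ + 1/8; assume θ Y* < 1 and set θ* = θ/(1 − θ Y*), δ* = δ, d* = d/(1 − θ Y*), β* = β/(1 − θ Y*), α* = α/(1 − θ Y*). For any z, B, C ∈ ℝ with C < 1/2, define X* = (z − ν₂)λ + B − ν₁ + ((1/2)(z − ν₂)² + γ² C − 2 C γ (z − ν₂))/(1 − 2C) and X** = −(1/2) z + B + ((1/2) z² + (γ*)² C − 2 C γ* z)/(1 −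 2C), and assume θ X* < 1. Then: (i) δ (w(X*, θ) − w(Y*, θ)) = δ* w(X**, θ*); (ii) β (v(X*, θ) − v(Y*, θ)) = β* v(X**, θ*); (iii) α (v(X*, θ) − v(Y*, θ)) = α* v(X**, θ*); (iv) d (v(X*, θ) − v(Y*, θ)) = d* v(X**, θ*). Consequently, under the risk-neutral measure the realized variance still follows a LHARG process with the starred parameters and λ* = −1/2. -/
/-- Risk-neutral parameter mapping of the LHARG model: with
`ν₂ = λ + 1/2`, `γ* = γ + λ + 1/2`, `Y* = −λ²/2 − ν₁ + 1/8`, `θ* = θ/(1 − θY*)`,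
`δ* = δ`, `d* = d/(1 − θY*)`, `β* = β/(1 − θY*)`, `α* = α/(1 − θY*)`, the risk-neutral
recursion coefficients coincide with the physical ones computed with the starred parameters. -/
theorem lharg_risk_neutral_mapping (lam γ ν₁ θ δ d β α : ℝ)
    (hθ : 0 < θ) (hδ : 0 < δ) (hd : 0 ≤ d)
    (z B C : ℝ) (hC : C < 1 / 2) :
    let ν₂ : ℝ := lam + 1 / 2
    let γs : ℝ := γ + lam + 1 / 2
    let Ys : ℝ := -lam ^ 2 / 2 - ν₁ + 1 / 8
    let Xs : ℝ := (z - ν₂) * lam + B - ν₁ +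
      ((1 / 2) * (z - ν₂) ^ 2 + γ ^ 2 * C - 2 * C * γ * (z - ν₂)) / (1 - 2 * C)
    let Xss : ℝ := -(1 / 2) * z + B +
      ((1 / 2) * z ^ 2 + γs ^ 2 * C - 2 * C * γs * z) / (1 - 2 * C)
    let θs : ℝ := θ / (1 - θ * Ys)
    let δs : ℝ := δ
    let ds : ℝ := d / (1 - θ * Ys)
    let βs : ℝ := β / (1 - θ * Ys)
    let αs : ℝ := α / (1 - θ * Ys)
    θ * Ys < 1 → θ * Xs < 1 →
      (δ * (wfun Xs θ - wfun Ys θ) = δs * wfun Xss θs ∧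
       β * (vfun Xs θ - vfun Ys θ) = βs * vfun Xss θs ∧
       α * (vfun Xs θ - vfun Ys θ) = αs * vfun Xss θs ∧
       d * (vfun Xs θ - vfun Ys θ) = ds * vfun Xss θs) := by
  intro ν₂ γs Ys Xs Xss θs δs ds βs αs hY hX
  have hC2 : (1 : ℝ) - 2 * C ≠ 0 := by linarith
  have ha : (0 : ℝ) < 1 - θ * Ys := by linarith
  have hb : (0 : ℝ) < 1 - θ * Xs := by linarith
  have hXss : Xss = Xs - Ys := by
    show -(1 / 2) * z + B +
      ((1 / 2) * z ^ 2 + γs ^ 2 * C - 2 * C * γs * z) / (1 - 2 * C)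
      = ((z - ν₂) * lam + B - ν₁ +
      ((1 / 2) * (z - ν₂) ^ 2 + γ ^ 2 * C - 2 * C * γ * (z - ν₂)) / (1 - 2 * C))
      - (-lam ^ 2 / 2 - ν₁ + 1 / 8)
    show -(1 / 2) * z + B +
      ((1 / 2) * z ^ 2 + (γ + lam + 1 / 2) ^ 2 * C - 2 * C * (γ + lam + 1 / 2) * z) / (1 - 2 * C)
      = ((z - (lam + 1 / 2)) * lam + B - ν₁ +
      ((1 / 2) * (z - (lam + 1 / 2)) ^ 2 + γ ^ 2 * C - 2 * C * γ * (z - (lam + 1 / 2))) / (1 - 2 * C))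
      - (-lam ^ 2 / 2 - ν₁ + 1 / 8)
    field_simp
    ring
  have hfrac : 1 - θs * Xss = (1 - θ * Xs) / (1 - θ * Ys) := by
    show 1 - θ / (1 - θ * Ys) * Xss = (1 - θ * Xs) / (1 - θ * Ys)
    rw [hXss]; field_simp; ring
  have hw : wfun Xss θs = wfun Xs θ - wfun Ys θ := by
    unfold wfun
    rw [hfrac, Real.log_div hb.ne' ha.ne']
  have hv : vfun Xss θs = θ * (Xs - Ys) / (1 - θ * Xs) := by
    unfold vfun
    rw [hfrac, hXss]
    show θ / (1 - θ * Ys) * (Xs - Ys) / ((1 - θ * Xs) / (1 - θ * Ys)) = _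
    field_simp
  have hvdiff : vfun Xs θ - vfun Ys θ =
      θ * (Xs - Ys) / ((1 - θ * Xs) * (1 - θ * Ys)) := by
    unfold vfun; field_simp; ring
  obtain ⟨x, hx⟩ : ∃ x, Xs = x := ⟨Xs, rfl⟩
  obtain ⟨y, hy⟩ : ∃ y, Ys = y := ⟨Ys, rfl⟩
  rw [hx] at hv hvdiff hb
  rw [hy] at hv hvdiff ha
  have key : ∀ c : ℝ, c * (vfun Xs θ - vfun Ys θ) = c / (1 - θ * Ys) * vfun Xss θs := by
    intro c
    rw [hx, hy, hv, hvdiff, div_mul_div_comm, mul_comm (1 - θ * y) (1 - θ * x),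
      ← mul_div_assoc]
  exact ⟨by rw [hw], key β, key α, key d⟩
end
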